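/- arXiv:1609.00794 — 3 statements merged into one kernel-verified Lean document; each statement's English description precedes it below -/
import Mathlib

section
/- Fix t₀ ∈ ℝ and suppose inf_{t ≥ t₀} {a₁⁻(t) − κ(a₂⁻(t))₋} > (χ)₊. Then for any initial data 0 ≤ u̲₀ ≤ ū₀, the solution (ū(t), u̲(t)) of the comparison ODE system with (ū(t₀), u̲(t₀)) = (ū₀, u̲₀) exists for all t ≥ t₀ and satisfies 0 ≤ u̲(t) ≤ ū(t) for all t ≥ t₀; moreover 0 ≤ ū(t) ≤ max{ ū₀, (sup_{t∈ℝ} a₀⁺(t)) / (inf_{t ≥ t₀} {a₁⁻(t) − κ(a₂⁻(t))₋ − (χ)₊}) } for all t ≥ t₀. -/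
/-- `f : ℝ → ℝ` is continuous and bounded. -/
def ContBdd (f : ℝ → ℝ) : Prop :=
  Continuous f ∧ BddAbove (Set.range f) ∧ BddBelow (Set.range f)

/-- `(ub, lb)` solves the comparison ODE system
`ū' = (χ)₊ ū(ū − u̲) + ū[a₀⁺(t) − a₁⁻(t)ū − κ(a₂⁻(t))₊ u̲ + κ(a₂⁻(t))₋ ū]`,
`u̲' = (χ)₊ u̲(u̲ − ū) + u̲[a₀⁻(t) − a₁⁺(t)u̲ − κ(a₂⁺(t))₊ ū + κ(a₂⁺(t))₋ u̲]`
on the interval `[t₀, ∞)`. -/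
def CompODESystemOn (χ κ : ℝ) (a₀m a₀p a₁m a₁p a₂m a₂p : ℝ → ℝ)
    (t₀ : ℝ) (ub lb : ℝ → ℝ) : Prop :=
  ∀ t ∈ Set.Ici t₀,
    HasDerivWithinAt ub
      (max χ 0 * ub t * (ub t - lb t) +
        ub t * (a₀p t - a₁m t * ub t - κ * max (a₂m t) 0 * lb t
          + κ * max (-(a₂m t)) 0 * ub t)) (Set.Ici t₀) t ∧
    HasDerivWithinAt lb
      (max χ 0 * lb t * (lb t - ub t) +
        lb t * (a₀m t - a₁p t * lb t - κ * max (a₂p t) 0 * ub t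
          + κ * max (-(a₂p t)) 0 * lb t)) (Set.Ici t₀) t

set_option maxHeartbeats 2000000

open Set Topology Filter

lemma abs_mul_le'
 {a b Ca Cb : ℝ} (h1 : |a| ≤ Ca) (h2 : |b| ≤ Cb) : |a * b| ≤ Ca * Cb := by
  rw [abs_mul]
  exact mul_le_mul h1 h2 (abs_nonneg b) ((abs_nonneg a).trans h1)

lemma H_abs_le {χp A B X u v P Q R S : ℝ} (hχ : 0 ≤ χp) (hA : 0 ≤ A) (hB : 0 ≤ B) (hX : 0 ≤ X)
    (hu : |u| ≤ X) (hv : |v| ≤ X) (hP : |P| ≤ A) (hQ : |Q| ≤ A) (hR : |R| ≤ B) (hS : |S| ≤ B) :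
    |χp*(u - v) + P - Q*u - R*v + S*u| ≤ 2*χp*X + A + A*X + 2*B*X := by
  have huv : |u - v| ≤ 2*X := abs_le.2 ⟨by linarith [abs_le.1 hu, abs_le.1 hv],
    by linarith [(abs_le.1 hu).2, (abs_le.1 hv).1]⟩
  have q1 := abs_le.1 (abs_mul_le' (show |χp| ≤ χp by rw [abs_of_nonneg hχ]) huv)
  have q2 := abs_le.1 hP
  have q3 := abs_le.1 (abs_mul_le' hQ hu)
  have q4 := abs_le.1 (abs_mul_le' hR hv)
  have q5 := abs_le.1 (abs_mul_le' hS hu)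
  refine abs_le.2 ⟨by nlinarith [q1.1, q3.1, q4.1, q5.1], by nlinarith [q1.2, q3.2, q4.2, q5.2]⟩

lemma comp_lip {χp A B X P Q R S u v u' v' : ℝ}
    (hχ : 0 ≤ χp) (hA : 0 ≤ A) (hB : 0 ≤ B) (hX : 0 ≤ X)
    (hP : |P| ≤ A) (hQ : |Q| ≤ A) (hR : |R| ≤ B) (hS : |S| ≤ B)
    (hu : |u| ≤ X) (hv : |v| ≤ X) (hu' : |u'| ≤ X) (hv' : |v'| ≤ X) :
    |u*(χp*(u - v) + P - Q*u - R*v + S*u) - u'*(χp*(u' - v') + P - Q*u' - R*v' + S*u')|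
      ≤ ((2*χp*X + A + A*X + 2*B*X) + X*(χp + A + B))*|u - u'| + X*(χp + B)*|v - v'| := by
  have hH : |χp*(u - v) + P - Q*u - R*v + S*u| ≤ 2*χp*X + A + A*X + 2*B*X :=
    H_abs_le hχ hA hB hX hu hv hP hQ hR hS
  have hdH : |(χp*(u - v) + P - Q*u - R*v + S*u) - (χp*(u' - v') + P - Q*u' - R*v' + S*u')|
      ≤ (χp + A + B)*|u - u'| + (χp + B)*|v - v'| := by
    have hid : (χp*(u - v) + P - Q*u - R*v + S*u) - (χp*(u' - v') + P - Q*u' - R*v' + S*u')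
        = (χp - Q + S)*(u - u') + (-(χp + R))*(v - v') := by ring
    rw [hid]
    refine (abs_add_le _ _).trans (add_le_add ?_ ?_)
    · exact abs_mul_le' (by
        have := abs_le.1 hQ; have := abs_le.1 hS
        refine abs_le.2 ⟨by linarith, by linarith⟩) le_rfl
    · exact abs_mul_le' (by
        have := abs_le.1 hR
        rw [abs_neg]
        refine abs_le.2 ⟨by linarith, by linarith⟩) le_rfl
  have hid2 : u*(χp*(u - v) + P - Q*u - R*v + S*u) - u'*(χp*(u' - v') + P - Q*u' - R*v' + S*u')
      = (u - u')*(χp*(u - v) + P - Q*u - R*v + S*u)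
        + u'*((χp*(u - v) + P - Q*u - R*v + S*u) - (χp*(u' - v') + P - Q*u' - R*v' + S*u')) := by
    ring
  rw [hid2]
  refine (abs_add_le _ _).trans ?_
  have t1 : |(u - u')*(χp*(u - v) + P - Q*u - R*v + S*u)| ≤ |u - u'| * (2*χp*X + A + A*X + 2*B*X) :=
    abs_mul_le' le_rfl hH
  have t2 : |u'*((χp*(u - v) + P - Q*u - R*v + S*u) - (χp*(u' - v') + P - Q*u' - R*v' + S*u'))|
      ≤ X*((χp + A + B)*|u - u'| + (χp + B)*|v - v'|) := abs_mul_le' hu' hdH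
  linarith [t1, t2, abs_nonneg (u - u'), abs_nonneg (v - v')]

noncomputable def clf (X1 : ℝ) : ℝ → ℝ := fun r => max (-1) (min r X1)

section Clamp
variable {X1 : ℝ} (hX1 : 1 ≤ X1)
include hX1

lemma clf_abs_le (r : ℝ) : |clf X1 r| ≤ X1 := by
  unfold clf
  refine abs_le.2 ⟨?_, ?_⟩
  · have : min r X1 ≤ X1 := min_le_right _ _
    have : (-X1) ≤ -1 := by linarith
    exact le_max_of_le_left this
  · exact max_le (by linarith) (le_trans (min_le_right _ _) le_rfl)

lemma clf_lip (a b : ℝ) : |clf X1 a - clf X1 b| ≤ |a - b| := by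
  unfold clf
  rw [max_comm (-1) (min a X1), max_comm (-1) (min b X1)]
  refine (abs_max_sub_max_le_abs _ _ _).trans ?_
  have := abs_min_sub_min_le_max a X1 b X1
  simpa using this

lemma clf_mono {a b : ℝ} (h : a ≤ b) : clf X1 a ≤ clf X1 b :=
  max_le_max le_rfl (min_le_min h le_rfl)

lemma clf_id {r : ℝ} (h0 : 0 ≤ r) (hr : r ≤ X1) : clf X1 r = r := by
  unfold clf
  rw [min_eq_left hr, max_eq_right (by linarith)]

lemma clf_nonneg {r : ℝ} (h0 : 0 ≤ r) : 0 ≤ clf X1 r :=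
  le_max_of_le_right (le_min h0 (by linarith))

lemma clf_of_nonpos {r : ℝ} (h : r ≤ 0) : r ≤ clf X1 r ∧ clf X1 r ≤ 0 := by
  unfold clf
  rw [min_eq_left (by linarith)]
  exact ⟨le_max_right _ _, max_le (by norm_num) h⟩

lemma clf_ge {m r : ℝ} (hm0 : 0 ≤ m) (hmX : m ≤ X1) (hmr : m ≤ r) : m ≤ clf X1 r :=
  le_max_of_le_right (le_min hmr hmX)

lemma clf_diff_le {a b : ℝ} (h : a ≤ b) : clf X1 b - clf X1 a ≤ b - a := by
  have h1 := clf_lip hX1 b a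
  have h2 := clf_mono hX1 h
  rw [abs_of_nonneg (by linarith), abs_of_nonneg (by linarith)] at h1
  linarith
end Clamp


lemma abs_mul_le_of {c C x X : ℝ} (hc : 0 ≤ c) (hcC : c ≤ C) (hx : |x| ≤ X) : |c * x| ≤ C * X := by
  rw [abs_mul, abs_of_nonneg hc]
  exact mul_le_mul hcC hx (abs_nonneg x) (hc.trans hcC)

lemma ineq_sign {χp A B X y cy cx P' Q' R' S' : ℝ}
    (hχ : 0 ≤ χp) (hA : 0 ≤ A) (hB : 0 ≤ B) (hX : 0 ≤ X)
    (hy : y ≤ 0) (hcy1 : y ≤ cy) (hcy2 : cy ≤ 0)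
    (hcx : |cx| ≤ X) (hcyX : |cy| ≤ X)
    (hP' : |P'| ≤ A) (hQ'0 : 0 ≤ Q') (hQ' : Q' ≤ A)
    (hR'0 : 0 ≤ R') (hR' : R' ≤ B) (hS'0 : 0 ≤ S') (hS' : S' ≤ B) :
    (2*χp*X + A + A*X + 2*B*X) * y ≤ cy * (χp*(cy - cx) + P' - Q'*cy - R'*cx + S'*cy) := by
  obtain ⟨hcx1, hcx2⟩ := abs_le.1 hcx
  obtain ⟨hcy1', hcy2'⟩ := abs_le.1 hcyX
  set H := χp*(cy - cx) + P' - Q'*cy - R'*cx + S'*cy with hH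
  have hHB : H ≤ 2*χp*X + A + A*X + 2*B*X := by
    have e1 : χp*(cy - cx) ≤ χp*(2*X) := mul_le_mul_of_nonneg_left (by linarith) hχ
    have e2 := (abs_le.1 hP').2
    have e3 := (abs_le.1 (abs_mul_le_of hQ'0 hQ' hcyX)).1
    have e4 := (abs_le.1 (abs_mul_le_of hR'0 hR' hcx)).1
    have e5 := (abs_le.1 (abs_mul_le_of hS'0 hS' hcyX)).2
    rw [hH]; linarith
  have h1 : cy * (2*χp*X + A + A*X + 2*B*X) ≤ cy * H := mul_le_mul_of_nonpos_left hHB hcy2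
  have h2 : y * (2*χp*X + A + A*X + 2*B*X) ≤ cy * (2*χp*X + A + A*X + 2*B*X) :=
    mul_le_mul_of_nonneg_right hcy1 (by positivity)
  linarith

lemma ineq_order {χp A B X x y cx cy P P' Q Q' R R' S S' : ℝ}
    (hχ : 0 ≤ χp) (hA : 0 ≤ A) (hB : 0 ≤ B) (hX : 0 ≤ X)
    (hw : x - y ≤ 0)
    (hcy0 : 0 ≤ cy) (hcyX : |cy| ≤ X) (hcxX : |cx| ≤ X)
    (hcxy : cx ≤ cy) (hwcx : x - y ≤ cx) (hwdc : x - y ≤ cx - cy)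
    (hPa : |P| ≤ A) (hP'a : |P'| ≤ A) (hPP : P' ≤ P)
    (hQ0 : 0 ≤ Q) (hQQ : Q ≤ Q') (hQ'A : Q' ≤ A)
    (hR0 : 0 ≤ R) (hRR : R ≤ R') (hR'B : R' ≤ B)
    (hS'0 : 0 ≤ S') (hSS : S' ≤ S) (hSB : S ≤ B) :
    ((2*χp*X + A + A*X + 2*B*X) + X*(2*χp + 4*B) + (4*χp*X + 2*A + 2*A*X + 4*B*X)) * (x - y)
      ≤ cx * (χp*(cx - cy) + P - Q*cx - R*cy + S*cx)
        - cy * (χp*(cy - cx) + P' - Q'*cy - R'*cx + S'*cy) := by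
  obtain ⟨hcx1, hcx2⟩ := abs_le.1 hcxX
  obtain ⟨hcy1', hcy2'⟩ := abs_le.1 hcyX
  set w := x - y with hwdef
  set Hx := χp*(cx - cy) + P - Q*cx - R*cy + S*cx with hHx
  set Hy := χp*(cy - cx) + P' - Q'*cy - R'*cx + S'*cy with hHy
  have hdc0 : cx - cy ≤ 0 := by linarith
  have hQ'0 : 0 ≤ Q' := hQ0.trans hQQ
  have hR'0 : 0 ≤ R' := hR0.trans hRR
  have hS0 : 0 ≤ S := hS'0.trans hSS
  have hHyB : Hy ≤ 2*χp*X + A + A*X + 2*B*X := by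
    have e1 : χp*(cy - cx) ≤ χp*(2*X) := mul_le_mul_of_nonneg_left (by linarith) hχ
    have e2 := (abs_le.1 hP'a).2
    have e3 := (abs_le.1 (abs_mul_le_of hQ'0 hQ'A hcyX)).1
    have e4 := (abs_le.1 (abs_mul_le_of hR'0 hR'B hcxX)).1
    have e5 := (abs_le.1 (abs_mul_le_of hS'0 (hSS.trans hSB) hcyX)).2
    rw [hHy]; linarith
  have s1a : (cx - cy) * (2*χp*X + A + A*X + 2*B*X) ≤ (cx - cy) * Hy :=
    mul_le_mul_of_nonpos_left hHyB hdc0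
  have s1b : w * (2*χp*X + A + A*X + 2*B*X) ≤ (cx - cy) * (2*χp*X + A + A*X + 2*B*X) :=
    mul_le_mul_of_nonneg_right hwdc (by positivity)
  have hQcx : Q*cx ≤ Q'*cy := by
    rcases le_total cx 0 with h | h
    · nlinarith
    · nlinarith
  have hD : (2*χp + 4*B) * w ≤ Hx - Hy := by
    have p1 : χp*w ≤ χp*(cx - cy) := mul_le_mul_of_nonneg_left hwdc hχ
    have p3 : R*w ≤ R*(cx - cy) := mul_le_mul_of_nonneg_left hwdc hR0
    have p3' : B*w ≤ R*w := mul_le_mul_of_nonpos_right (hRR.trans hR'B) hw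
    have p4 : (R'-R)*w ≤ (R'-R)*cx := mul_le_mul_of_nonneg_left hwcx (by linarith)
    have p4' : B*w ≤ (R'-R)*w := mul_le_mul_of_nonpos_right (by linarith) hw
    have p5 : S'*w ≤ S'*(cx - cy) := mul_le_mul_of_nonneg_left hwdc hS'0
    have p5' : B*w ≤ S'*w := mul_le_mul_of_nonpos_right (hSS.trans hSB) hw
    have p6 : (S-S')*w ≤ (S-S')*cx := mul_le_mul_of_nonneg_left hwcx (by linarith)
    have p6' : B*w ≤ (S-S')*w := mul_le_mul_of_nonpos_right (by linarith) hw
    have hid : Hx - Hy = 2*χp*(cx-cy) + (P - P') + (Q'*cy - Q*cx)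
        + (R*(cx-cy) + (R'-R)*cx) + (S'*(cx-cy) + (S-S')*cx) := by rw [hHx, hHy]; ring
    rw [hid]
    linarith
  have hDB : |Hx - Hy| ≤ 4*χp*X + 2*A + 2*A*X + 4*B*X := by
    have q1 : |χp*(cx-cy)| ≤ χp*(2*X) := abs_mul_le_of hχ le_rfl (abs_le.2 ⟨by linarith, by linarith⟩)
    have q1' := abs_le.1 q1
    have q2 := abs_le.1 hPa
    have q2' := abs_le.1 hP'a
    have q3 := abs_le.1 (abs_mul_le_of hQ'0 hQ'A hcyX)
    have q3' := abs_le.1 (abs_mul_le_of hQ0 (hQQ.trans hQ'A) hcxX)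
    have q4 := abs_le.1 (abs_mul_le_of hR'0 hR'B hcxX)
    have q4' := abs_le.1 (abs_mul_le_of hR0 (hRR.trans hR'B) hcyX)
    have q5 := abs_le.1 (abs_mul_le_of hS0 hSB hcxX)
    have q5' := abs_le.1 (abs_mul_le_of hS'0 (hSS.trans hSB) hcyX)
    rw [hHx, hHy, abs_le]
    constructor <;>
      linarith [q1'.1, q1'.2, q2.1, q2.2, q2'.1, q2'.2, q3.1, q3.2, q3'.1, q3'.2,
        q4.1, q4.2, q4'.1, q4'.2, q5.1, q5.2, q5'.1, q5'.2]
  have hDBnn : (0:ℝ) ≤ 4*χp*X + 2*A + 2*A*X + 4*B*X := by positivity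
  have hfin : (X*(2*χp + 4*B) + (4*χp*X + 2*A + 2*A*X + 4*B*X)) * w ≤ cx * (Hx - Hy) := by
    rcases le_total (Hx - Hy) 0 with h | h
    · have r1 : X*(Hx-Hy) ≤ cx*(Hx-Hy) := mul_le_mul_of_nonpos_right hcx2 h
      have r2 : X*((2*χp+4*B)*w) ≤ X*(Hx-Hy) := mul_le_mul_of_nonneg_left hD hX
      have r3 : (4*χp*X + 2*A + 2*A*X + 4*B*X)*w ≤ 0 := mul_nonpos_of_nonneg_of_nonpos hDBnn hw
      linarith
    · have r1 : w*(Hx-Hy) ≤ cx*(Hx-Hy) := mul_le_mul_of_nonneg_right hwcx h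
      have r2 : w*(4*χp*X + 2*A + 2*A*X + 4*B*X) ≤ w*(Hx-Hy) := by
        have := (abs_le.1 hDB).2
        exact mul_le_mul_of_nonpos_left this hw
      have r3 : X*(2*χp+4*B)*w ≤ 0 :=
        mul_nonpos_of_nonneg_of_nonpos (by positivity) hw
      linarith
  have hsplit : cx*Hx - cy*Hy = (cx - cy)*Hy + cx*(Hx - Hy) := by ring
  linarith [s1a, s1b, hfin, hsplit]

lemma ineq_upper {χp P Q R S Sb J M cx cy : ℝ}
    (hχ : 0 ≤ χp) (hcy : 0 ≤ cy) (hM0 : 0 ≤ M) (hMcx : M ≤ cx)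
    (hR : 0 ≤ R) (hPS : P ≤ Sb) (hJ : J ≤ Q - S - χp) (hJ0 : 0 < J) (hSbJM : Sb ≤ J * M) :
    cx * (χp*(cx - cy) + P - Q*cx - R*cy + S*cx) ≤ 0 := by
  have hcx0 : 0 ≤ cx := hM0.trans hMcx
  have h1 : χp*(cx - cy) ≤ χp*cx := mul_le_mul_of_nonneg_left (by linarith) hχ
  have h2 : J*cx ≤ (Q - S - χp)*cx := mul_le_mul_of_nonneg_right hJ hcx0
  have h3 : J*M ≤ J*cx := mul_le_mul_of_nonneg_left hMcx hJ0.le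
  have h4 : (0:ℝ) ≤ R*cy := mul_nonneg hR hcy
  have hH : χp*(cx - cy) + P - Q*cx - R*cy + S*cx ≤ 0 := by nlinarith
  have := mul_le_mul_of_nonneg_left hH hcx0
  simpa using this



lemma nonneg_of_deriv_ge {f f' : ℝ → ℝ} {t₀ : ℝ}
    (hd : ∀ t ∈ Set.Ici t₀, HasDerivWithinAt f (f' t) (Set.Ici t₀) t)
    (h0 : 0 ≤ f t₀)
    (hK : ∀ T, t₀ < T → ∃ K, 0 ≤ K ∧ ∀ s ∈ Set.Icc t₀ T, f s ≤ 0 → K * f s ≤ f' s) :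
    ∀ t ∈ Set.Ici t₀, 0 ≤ f t := by
  intro t₂ ht₂
  by_contra hneg
  push_neg at hneg
  have hcont : ContinuousOn f (Set.Ici t₀) := fun s hs => (hd s hs).continuousWithinAt
  have ht₀₂ : t₀ < t₂ := by
    rcases eq_or_lt_of_le (show t₀ ≤ t₂ from ht₂) with h | h
    · exact absurd h0 (by rw [h]; exact not_le.2 hneg)
    · exact h
  obtain ⟨K, hK0, hKs⟩ := hK t₂ ht₀₂
  set S : Set ℝ := {s | s ∈ Set.Icc t₀ t₂ ∧ 0 ≤ f s} with hSdef
  have hSsub : S ⊆ Set.Icc t₀ t₂ := fun s hs => hs.1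
  have hSne : S.Nonempty := ⟨t₀, ⟨le_refl _, ht₂⟩, h0⟩
  have hSbdd : BddAbove S := ⟨t₂, fun s hs => hs.1.2⟩
  set t₁ := sSup S with ht₁def
  have ht₁mem : t₁ ∈ Set.Icc t₀ t₂ :=
    ⟨le_csSup hSbdd ⟨⟨le_refl _, ht₂⟩, h0⟩, csSup_le hSne fun s hs => hs.1.2⟩
  have hlt : ∀ s, t₁ < s → s ≤ t₂ → f s < 0 := by
    intro s hs1 hs2
    by_contra hge
    push_neg at hge
    exact absurd (le_csSup hSbdd ⟨⟨ht₁mem.1.trans hs1.le, hs2⟩, hge⟩) (not_le.2 hs1)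
  have ht₁cl : t₁ ∈ closure S := csSup_mem_closure hSne hSbdd
  have hne : (𝓝[S] t₁).NeBot := mem_closure_iff_nhdsWithin_neBot.1 ht₁cl
  have hft₁ : 0 ≤ f t₁ := by
    have htend : Filter.Tendsto f (𝓝[S] t₁) (𝓝 (f t₁)) :=
      ((hcont t₁ ht₁mem.1).mono (fun s hs => (hSsub hs).1)).tendsto
    exact ge_of_tendsto htend (Filter.eventually_iff_exists_mem.2
      ⟨S, self_mem_nhdsWithin, fun s hs => hs.2⟩)
  have ht₁lt : t₁ < t₂ := lt_of_le_of_ne ht₁mem.2 (by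
    intro h
    rw [h] at hft₁
    exact absurd hft₁ (not_le.2 hneg))
  have hft₁' : f t₁ ≤ 0 := by
    have hcl : t₁ ∈ closure (Set.Ioc t₁ t₂) := by
      rw [closure_Ioc ht₁lt.ne]
      exact ⟨le_refl _, ht₁lt.le⟩
    have hne' : (𝓝[Set.Ioc t₁ t₂] t₁).NeBot := mem_closure_iff_nhdsWithin_neBot.1 hcl
    have htend : Filter.Tendsto f (𝓝[Set.Ioc t₁ t₂] t₁) (𝓝 (f t₁)) :=
      ((hcont t₁ ht₁mem.1).mono (fun s hs => ht₁mem.1.trans hs.1.le)).tendsto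
    exact le_of_tendsto htend (Filter.eventually_iff_exists_mem.2
      ⟨Set.Ioc t₁ t₂, self_mem_nhdsWithin, fun s hs => (hlt s hs.1 hs.2).le⟩)
  have hfle : ∀ x ∈ Set.Icc t₁ t₂, f x ≤ 0 := by
    intro x hx
    rcases eq_or_lt_of_le hx.1 with h | h
    · rw [← h]; exact hft₁'
    · exact (hlt x h hx.2).le
  have hIccsub : Set.Icc t₁ t₂ ⊆ Set.Ici t₀ := fun s hs => ht₁mem.1.trans hs.1
  have hg := le_gronwallBound_of_liminf_deriv_right_le
      (f := fun s => -f s) (f' := fun s => -f' s) (δ := 0) (K := K) (ε := 0)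
      (a := t₁) (b := t₂)
      ((hcont.mono hIccsub).neg)
      (fun x hx r hr => by
        have hder : HasDerivWithinAt (fun s => -f s) (-f' x) (Set.Ici x) x :=
          ((hd x (hIccsub ⟨hx.1, hx.2.le⟩)).mono
            (Set.Ici_subset_Ici.2 (ht₁mem.1.trans hx.1))).neg
        exact hder.liminf_right_slope_le hr)
      (by simpa using hft₁)
      (fun x hx => by
        have h1 := hKs x ⟨ht₁mem.1.trans hx.1, hx.2.le⟩ (hfle x ⟨hx.1, hx.2.le⟩)
        show -f' x ≤ K * -f x + 0
        linarith)
  have h2 : -f t₂ ≤ gronwallBound 0 K 0 (t₂ - t₁) := hg t₂ ⟨ht₁lt.le, le_refl _⟩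
  rw [gronwallBound_ε0_δ0] at h2
  linarith



lemma global_solution {E : Type*} [NormedAddCommGroup E] [NormedSpace ℝ E] [CompleteSpace E]
    (F : ℝ → E → E) (C : ℝ) (L : NNReal)
    (hC : ∀ t x, ‖F t x‖ ≤ C)
    (hL : ∀ t, LipschitzWith L (F t))
    (hcont : ∀ x, Continuous fun t => F t x)
    (t₀ : ℝ) (x₀ : E) :
    ∃ u : ℝ → E, u t₀ = x₀ ∧ ∀ t ∈ Set.Ici t₀, HasDerivWithinAt u (F t (u t)) (Set.Ici t₀) t := by
  have hC0 : 0 ≤ C := le_trans (norm_nonneg _) (hC t₀ x₀)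
  have hex : ∀ n : ℕ, ∃ f : ℝ → E, f t₀ = x₀ ∧
      ∀ t ∈ Set.Icc t₀ (t₀ + n), HasDerivWithinAt f (F t (f t)) (Set.Icc t₀ (t₀ + n)) t := by
    intro n
    have hpl : IsPicardLindelof F (tmin := t₀) (tmax := t₀ + n)
        ⟨t₀, le_refl _, le_add_of_nonneg_right n.cast_nonneg⟩ x₀ (Real.toNNReal (C * n + 1)) 0
        (Real.toNNReal C) L :=
      { lipschitzOnWith := fun t _ => (hL t).lipschitzOnWith
        continuousOn := fun x _ => (hcont x).continuousOn
        norm_le := fun t _ x _ => (hC t x).trans (Real.le_coe_toNNReal C)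
        mul_max_le := by
          have : max (t₀ + n - t₀) (t₀ - t₀) = (n : ℝ) := by
            rw [max_eq_left] <;> simp
          simp only [this, Real.coe_toNNReal _ hC0, NNReal.coe_zero, sub_zero,
            Real.coe_toNNReal _ (by positivity : (0:ℝ) ≤ C * n + 1)]
          linarith }
    exact hpl.exists_eq_forall_mem_Icc_hasDerivWithinAt₀
  choose α hα0 hαd using hex
  -- derivative within Ici t at interior-ish points
  have hIci : ∀ n : ℕ, ∀ t ∈ Set.Ico t₀ (t₀ + n),
      HasDerivWithinAt (α n) (F t (α n t)) (Set.Ici t) t := by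
    intro n t ht
    refine (hαd n t ⟨ht.1, ht.2.le⟩).mono_of_mem_nhdsWithin (mem_nhdsWithin.2
      ⟨Set.Iio (t₀ + n), isOpen_Iio, ht.2, fun s hs => ⟨ht.1.trans hs.2, hs.1.le⟩⟩)
  have hcons : ∀ m n : ℕ, m ≤ n → Set.EqOn (α m) (α n) (Set.Icc t₀ (t₀ + m)) := by
    intro m n hmn
    have hsub : Set.Icc t₀ (t₀ + (m:ℝ)) ⊆ Set.Icc t₀ (t₀ + n) :=
      Set.Icc_subset_Icc le_rfl (by exact_mod_cast add_le_add_right (Nat.cast_le.2 hmn) t₀)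
    refine ODE_solution_unique_of_mem_Icc_right
      (v := F) (s := fun _ => Set.univ) (K := L)
      (fun t _ => (hL t).lipschitzOnWith)
      (fun s hs => (hαd m s hs).continuousWithinAt)
      (fun t ht => hIci m t ht) (fun _ _ => trivial)
      (fun s hs => ((hαd n s (hsub hs)).continuousWithinAt).mono hsub)
      (fun t ht => hIci n t ⟨ht.1, lt_of_lt_of_le ht.2 (by
        exact_mod_cast add_le_add_right (Nat.cast_le.2 hmn) t₀)⟩)
      (fun _ _ => trivial) ?_
    rw [hα0 m, hα0 n]
  have hagree : ∀ m n : ℕ, ∀ s, s ∈ Set.Icc t₀ (t₀ + m) → s ∈ Set.Icc t₀ (t₀ + n) →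
      α m s = α n s := by
    intro m n s hm hn
    rcases le_total m n with h | h
    · exact hcons m n h hm
    · exact (hcons n m h hn).symm
  have hself : ∀ s : ℝ, t₀ ≤ s → s ∈ Set.Icc t₀ (t₀ + ((⌈s - t₀⌉₊ + 1 : ℕ) : ℝ)) := by
    intro s hs
    refine ⟨hs, ?_⟩
    have := Nat.le_ceil (s - t₀)
    push_cast
    linarith
  refine ⟨fun t => α (⌈t - t₀⌉₊ + 1) t, hα0 _, ?_⟩
  intro t ht
  set n : ℕ := ⌈t - t₀⌉₊ + 1 with hn
  have htn : t < t₀ + n := by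
    have := Nat.le_ceil (t - t₀)
    have : (⌈t - t₀⌉₊ : ℝ) < n := by rw [hn]; push_cast; linarith [Nat.le_ceil (t - t₀)]
    linarith [Nat.le_ceil (t - t₀)]
  have heq : ∀ s, t₀ ≤ s → s < t₀ + n → α (⌈s - t₀⌉₊ + 1) s = α n s := by
    intro s hs1 hs2
    exact hagree _ n s (hself s hs1) ⟨hs1, hs2.le⟩
  have hd1 : HasDerivWithinAt (α n) (F t (α n t)) (Set.Ici t₀) t :=
    (hαd n t ⟨ht, htn.le⟩).mono_of_mem_nhdsWithin (mem_nhdsWithin.2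
      ⟨Set.Iio (t₀ + n), isOpen_Iio, htn, fun s hs => ⟨hs.2, hs.1.le⟩⟩)
  have hev : (fun s => α (⌈s - t₀⌉₊ + 1) s) =ᶠ[𝓝[Set.Ici t₀] t] α n := by
    refine Filter.eventually_iff_exists_mem.2 ⟨Set.Iio (t₀ + n) ∩ Set.Ici t₀,
      Filter.inter_mem (mem_nhdsWithin_of_mem_nhds (Iio_mem_nhds htn)) self_mem_nhdsWithin,
      fun s hs => heq s hs.2 hs.1⟩
  have hteq : (fun s => α (⌈s - t₀⌉₊ + 1) s) t = α n t := heq t ht htn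
  have := hd1.congr_of_eventuallyEq hev hteq
  rw [← hteq] at this
  exact this

noncomputable def Fcomp (χ κ : ℝ) (a₀m a₀p a₁m a₁p a₂m a₂p : ℝ → ℝ) (X1 : ℝ) : ℝ → ℝ × ℝ → ℝ × ℝ :=
  fun t p =>
    (clf X1 p.1 * (max χ 0 * (clf X1 p.1 - clf X1 p.2) + a₀p t - a₁m t * clf X1 p.1
        - κ * max (a₂m t) 0 * clf X1 p.2 + κ * max (-(a₂m t)) 0 * clf X1 p.1),
     clf X1 p.2 * (max χ 0 * (clf X1 p.2 - clf X1 p.1) + a₀m t - a₁p t * clf X1 p.2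
        - κ * max (a₂p t) 0 * clf X1 p.1 + κ * max (-(a₂p t)) 0 * clf X1 p.2))

lemma ContBdd.exists_abs_le {f : ℝ → ℝ} (h : ContBdd f) : ∃ b : ℝ, 0 ≤ b ∧ ∀ t, |f t| ≤ b := by
  obtain ⟨-, ⟨b₁, hb₁⟩, ⟨b₂, hb₂⟩⟩ := h
  have h1 : ∀ t, f t ≤ b₁ := fun t => hb₁ ⟨t, rfl⟩
  have h2 : ∀ t, b₂ ≤ f t := fun t => hb₂ ⟨t, rfl⟩
  refine ⟨max b₁ (-b₂), ?_, fun t => abs_le.2 ⟨?_, ?_⟩⟩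
  · have := h1 0; have := h2 0
    rcases le_total 0 b₁ with h | h
    · exact le_max_of_le_left h
    · refine le_max_of_le_right (by linarith)
  · have := le_max_right b₁ (-b₂); linarith [h2 t]
  · exact (h1 t).trans (le_max_left _ _)

/-- if `inf_{t ≥ t₀} {a₁⁻(t) − κ(a₂⁻(t))₋} > (χ)₊`, then for any initial data
`0 ≤ u̲₀ ≤ ū₀` the solution of the comparison ODE system exists on `[t₀, ∞)` and satisfies
`0 ≤ u̲(t) ≤ ū(t)` together with the explicit upper bound for `ū`. -/
theorem comparison_system_global_existence_and_order
    (χ κ : ℝ) (hκ : 0 < κ)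
    (a₀m a₀p a₁m a₁p a₂m a₂p : ℝ → ℝ)
    (h₀ : ContBdd a₀m) (h₀' : ContBdd a₀p) (h₁ : ContBdd a₁m) (h₁' : ContBdd a₁p)
    (h₂ : ContBdd a₂m) (h₂' : ContBdd a₂p)
    (hle₀ : ∀ t, a₀m t ≤ a₀p t) (hle₁ : ∀ t, a₁m t ≤ a₁p t) (hle₂ : ∀ t, a₂m t ≤ a₂p t)
    (h₀pos : 0 < ⨅ t, a₀m t) (h₁nonneg : ∀ t, 0 ≤ a₁m t)
    (t₀ : ℝ)
    (hcond : max χ 0 < ⨅ t : Set.Ici t₀, (a₁m ↑t - κ * max (-(a₂m ↑t)) 0))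
    (ub₀ lb₀ : ℝ) (hlb₀ : 0 ≤ lb₀) (hord₀ : lb₀ ≤ ub₀) :
    (∃ ub lb : ℝ → ℝ, ub t₀ = ub₀ ∧ lb t₀ = lb₀ ∧
      CompODESystemOn χ κ a₀m a₀p a₁m a₁p a₂m a₂p t₀ ub lb) ∧
    (∀ ub lb : ℝ → ℝ, ub t₀ = ub₀ → lb t₀ = lb₀ →
      CompODESystemOn χ κ a₀m a₀p a₁m a₁p a₂m a₂p t₀ ub lb →
      ∀ t ∈ Set.Ici t₀,
        0 ≤ lb t ∧ lb t ≤ ub t ∧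
        ub t ≤ max ub₀
          ((⨆ s, a₀p s) /
            (⨅ s : Set.Ici t₀, (a₁m ↑s - κ * max (-(a₂m ↑s)) 0 - max χ 0)))) := by
  haveI : Nonempty (Set.Ici t₀) := ⟨⟨t₀, Set.self_mem_Ici⟩⟩
  have hχ0 : (0:ℝ) ≤ max χ 0 := le_max_right χ 0
  obtain ⟨b0, hb0n, hb0⟩ := h₀.exists_abs_le
  obtain ⟨b0', hb0'n, hb0'⟩ := h₀'.exists_abs_le
  obtain ⟨b1, hb1n, hb1⟩ := h₁.exists_abs_le
  obtain ⟨b1', hb1'n, hb1'⟩ := h₁'.exists_abs_le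
  obtain ⟨b2, hb2n, hb2⟩ := h₂.exists_abs_le
  obtain ⟨b2', hb2'n, hb2'⟩ := h₂'.exists_abs_le
  set A := b0 + b0' + b1 + b1' + b2 + b2' with hAdef
  have hA0 : 0 ≤ A := by rw [hAdef]; linarith
  have ha0m : ∀ s, |a₀m s| ≤ A := fun s => (hb0 s).trans (by rw [hAdef]; linarith)
  have ha0p : ∀ s, |a₀p s| ≤ A := fun s => (hb0' s).trans (by rw [hAdef]; linarith)
  have ha1m : ∀ s, |a₁m s| ≤ A := fun s => (hb1 s).trans (by rw [hAdef]; linarith)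
  have ha1p : ∀ s, |a₁p s| ≤ A := fun s => (hb1' s).trans (by rw [hAdef]; linarith)
  have ha2m : ∀ s, |a₂m s| ≤ A := fun s => (hb2 s).trans (by rw [hAdef]; linarith)
  have ha2p : ∀ s, |a₂p s| ≤ A := fun s => (hb2' s).trans (by rw [hAdef]; linarith)
  set B := κ * A with hBdef
  have hB0 : 0 ≤ B := by rw [hBdef]; positivity
  -- coefficient facts
  have hQ'A : ∀ s, a₁p s ≤ A := fun s => (le_abs_self _).trans (ha1p s)
  have hQ'0 : ∀ s, 0 ≤ a₁p s := fun s => (h₁nonneg s).trans (hle₁ s)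
  have hR0 : ∀ s, 0 ≤ κ * max (a₂m s) 0 := fun s => by positivity
  have hR'0 : ∀ s, 0 ≤ κ * max (a₂p s) 0 := fun s => by positivity
  have hRR : ∀ s, κ * max (a₂m s) 0 ≤ κ * max (a₂p s) 0 := fun s =>
    mul_le_mul_of_nonneg_left (max_le_max (hle₂ s) le_rfl) hκ.le
  have hR'B : ∀ s, κ * max (a₂p s) 0 ≤ B := fun s => by
    have h1 : max (a₂p s) 0 ≤ A := max_le ((le_abs_self _).trans (ha2p s)) hA0
    exact (mul_le_mul_of_nonneg_left h1 hκ.le).trans_eq hBdef.symm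
  have hS'0 : ∀ s, 0 ≤ κ * max (-(a₂p s)) 0 := fun s => by positivity
  have hSS : ∀ s, κ * max (-(a₂p s)) 0 ≤ κ * max (-(a₂m s)) 0 := fun s =>
    mul_le_mul_of_nonneg_left (max_le_max (neg_le_neg (hle₂ s)) le_rfl) hκ.le
  have hSB : ∀ s, κ * max (-(a₂m s)) 0 ≤ B := fun s => by
    have h1 : max (-(a₂m s)) 0 ≤ A := max_le ((neg_le_abs _).trans (ha2m s)) hA0
    exact (mul_le_mul_of_nonneg_left h1 hκ.le).trans_eq hBdef.symm
  have hRabs : ∀ s, |κ * max (a₂m s) 0| ≤ B := fun s => by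
    rw [abs_of_nonneg (hR0 s)]; exact (hRR s).trans (hR'B s)
  have hR'abs : ∀ s, |κ * max (a₂p s) 0| ≤ B := fun s => by
    rw [abs_of_nonneg (hR'0 s)]; exact hR'B s
  have hSabs : ∀ s, |κ * max (-(a₂m s)) 0| ≤ B := fun s => by
    rw [abs_of_nonneg ((hS'0 s).trans (hSS s))]; exact hSB s
  have hS'abs : ∀ s, |κ * max (-(a₂p s)) 0| ≤ B := fun s => by
    rw [abs_of_nonneg (hS'0 s)]; exact (hSS s).trans (hSB s)
  -- constants
  set Sb := (⨆ s, a₀p s) with hSbdef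
  have hSble : ∀ s, a₀p s ≤ Sb := fun s => le_ciSup h₀'.2.1 s
  set J := (⨅ s : Set.Ici t₀, (a₁m ↑s - κ * max (-(a₂m ↑s)) 0 - max χ 0)) with hJdef
  have hbddJ : BddBelow (Set.range fun s : Set.Ici t₀ =>
      a₁m ↑s - κ * max (-(a₂m ↑s)) 0 - max χ 0) := by
    refine ⟨-A - B - max χ 0, ?_⟩
    rintro x ⟨s, rfl⟩
    have e1 := (abs_le.1 (ha1m ↑s)).1
    have e2 := hSB ↑s
    show -A - B - max χ 0 ≤ a₁m ↑s - κ * max (-(a₂m ↑s)) 0 - max χ 0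
    linarith
  have hJle : ∀ s, t₀ ≤ s → J ≤ a₁m s - κ * max (-(a₂m s)) 0 - max χ 0 := by
    intro s hs
    rw [hJdef]
    exact ciInf_le hbddJ (⟨s, hs⟩ : Set.Ici t₀)
  have hbddJ2 : BddBelow (Set.range fun s : Set.Ici t₀ => a₁m ↑s - κ * max (-(a₂m ↑s)) 0) := by
    refine ⟨-A - B, ?_⟩
    rintro x ⟨s, rfl⟩
    have e1 := (abs_le.1 (ha1m ↑s)).1
    have e2 := hSB ↑s
    show -A - B ≤ a₁m ↑s - κ * max (-(a₂m ↑s)) 0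
    linarith
  have hJpos : 0 < J := by
    have h1 : (⨅ s : Set.Ici t₀, (a₁m ↑s - κ * max (-(a₂m ↑s)) 0)) - max χ 0 ≤ J := by
      rw [hJdef]
      apply le_ciInf
      intro s
      have h2 := ciInf_le hbddJ2 s
      have h3 : (⨅ s : Set.Ici t₀, (a₁m ↑s - κ * max (-(a₂m ↑s)) 0)) ≤ a₁m ↑s - κ * max (-(a₂m ↑s)) 0 := h2
      show (⨅ s : Set.Ici t₀, (a₁m ↑s - κ * max (-(a₂m ↑s)) 0)) - max χ 0 ≤ a₁m ↑s - κ * max (-(a₂m ↑s)) 0 - max χ 0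
      linarith
    linarith
  set M := max ub₀ (Sb / J) with hMdef
  have hM0 : 0 ≤ M := le_trans (hlb₀.trans hord₀) (le_max_left _ _)
  have hMub : ub₀ ≤ M := le_max_left _ _
  have hSbJM : Sb ≤ J * M := by
    have h1 : Sb / J ≤ M := le_max_right _ _
    have h2 := (div_le_iff₀ hJpos).1 h1
    nlinarith
  -- ===================== PART 2 : a priori bounds for any solution ==================
  have hinv : ∀ ub lb : ℝ → ℝ, ub t₀ = ub₀ → lb t₀ = lb₀ →
      CompODESystemOn χ κ a₀m a₀p a₁m a₁p a₂m a₂p t₀ ub lb →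
      ∀ t ∈ Set.Ici t₀, 0 ≤ lb t ∧ lb t ≤ ub t ∧ ub t ≤ M := by
    intro ub lb hub0 hlb0 hsys
    have hcub : ContinuousOn ub (Set.Ici t₀) := fun s hs => ((hsys s hs).1).continuousWithinAt
    have hclb : ContinuousOn lb (Set.Ici t₀) := fun s hs => ((hsys s hs).2).continuousWithinAt
    have hXbound : ∀ T, ∃ X, 0 ≤ X ∧ ∀ s ∈ Set.Icc t₀ T, |ub s| ≤ X ∧ |lb s| ≤ X := by
      intro T
      obtain ⟨X1b, hX1b⟩ := isCompact_Icc.exists_bound_of_continuousOn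
        (hcub.mono Set.Icc_subset_Ici_self)
      obtain ⟨X2b, hX2b⟩ := isCompact_Icc.exists_bound_of_continuousOn
        (hclb.mono Set.Icc_subset_Ici_self)
      refine ⟨max (max X1b X2b) 0, le_max_right _ _, fun s hs => ⟨?_, ?_⟩⟩
      · have := hX1b s hs; rw [Real.norm_eq_abs] at this
        exact this.trans (le_max_of_le_left (le_max_left _ _))
      · have := hX2b s hs; rw [Real.norm_eq_abs] at this
        exact this.trans (le_max_of_le_left (le_max_right _ _))
    -- Step 1 : 0 ≤ lb
    have hlbn : ∀ t ∈ Set.Ici t₀, 0 ≤ lb t := by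
      refine nonneg_of_deriv_ge (f := lb)
        (f' := fun t => max χ 0 * lb t * (lb t - ub t) +
          lb t * (a₀m t - a₁p t * lb t - κ * max (a₂p t) 0 * ub t
            + κ * max (-(a₂p t)) 0 * lb t))
        (fun t ht => (hsys t ht).2) (by rw [hlb0]; exact hlb₀) ?_
      intro T hT
      obtain ⟨X, hX0, hXb⟩ := hXbound T
      refine ⟨2*(max χ 0)*X + A + A*X + 2*B*X, by positivity, ?_⟩
      intro s hs hls
      obtain ⟨hxX, hyX⟩ := hXb s hs
      have key := ineq_sign (χp := max χ 0) (A := A) (B := B) (X := X)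
        (y := lb s) (cy := lb s) (cx := ub s)
        (P' := a₀m s) (Q' := a₁p s) (R' := κ * max (a₂p s) 0) (S' := κ * max (-(a₂p s)) 0)
        hχ0 hA0 hB0 hX0 hls le_rfl hls hxX hyX (ha0m s) (hQ'0 s) (hQ'A s)
        (hR'0 s) (hR'B s) (hS'0 s) ((hSS s).trans (hSB s))
      beta_reduce
      linarith [key]
    -- Step 2 : lb ≤ ub
    have hordn : ∀ t ∈ Set.Ici t₀, 0 ≤ ub t - lb t := by
      refine nonneg_of_deriv_ge (f := fun t => ub t - lb t)
        (f' := fun t =>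
          (max χ 0 * ub t * (ub t - lb t) +
            ub t * (a₀p t - a₁m t * ub t - κ * max (a₂m t) 0 * lb t
              + κ * max (-(a₂m t)) 0 * ub t)) -
          (max χ 0 * lb t * (lb t - ub t) +
            lb t * (a₀m t - a₁p t * lb t - κ * max (a₂p t) 0 * ub t
              + κ * max (-(a₂p t)) 0 * lb t)))
        (fun t ht => ((hsys t ht).1).sub ((hsys t ht).2))
        (by show 0 ≤ ub t₀ - lb t₀; rw [hub0, hlb0]; linarith) ?_
      intro T hT
      obtain ⟨X, hX0, hXb⟩ := hXbound T
      refine ⟨(2*(max χ 0)*X + A + A*X + 2*B*X) + X*(2*(max χ 0) + 4*B)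
        + (4*(max χ 0)*X + 2*A + 2*A*X + 4*B*X), by positivity, ?_⟩
      intro s hs hw
      have hw' : ub s - lb s ≤ 0 := hw
      obtain ⟨hxX, hyX⟩ := hXb s hs
      have hy0 : 0 ≤ lb s := hlbn s (Set.Icc_subset_Ici_self hs)
      have key := ineq_order (χp := max χ 0) (A := A) (B := B) (X := X)
        (x := ub s) (y := lb s) (cx := ub s) (cy := lb s)
        (P := a₀p s) (P' := a₀m s) (Q := a₁m s) (Q' := a₁p s)
        (R := κ * max (a₂m s) 0) (R' := κ * max (a₂p s) 0)
        (S := κ * max (-(a₂m s)) 0) (S' := κ * max (-(a₂p s)) 0)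
        hχ0 hA0 hB0 hX0 hw' hy0 hyX hxX (by linarith [hw'])
        (by linarith) le_rfl
        (ha0p s) (ha0m s) (hle₀ s) (h₁nonneg s) (hle₁ s) (hQ'A s)
        (hR0 s) (hRR s) (hR'B s) (hS'0 s) (hSS s) (hSB s)
      beta_reduce
      linarith [key]
    -- Step 3 : ub ≤ M
    have hubM : ∀ t ∈ Set.Ici t₀, 0 ≤ M - ub t := by
      refine nonneg_of_deriv_ge (f := fun t => M - ub t)
        (f' := fun t => -(max χ 0 * ub t * (ub t - lb t) +
            ub t * (a₀p t - a₁m t * ub t - κ * max (a₂m t) 0 * lb t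
              + κ * max (-(a₂m t)) 0 * ub t)))
        (fun t ht => ((hsys t ht).1).const_sub M)
        (by show 0 ≤ M - ub t₀; rw [hub0]; linarith) ?_
      intro T hT
      refine ⟨0, le_rfl, ?_⟩
      intro s hs hMs
      have hMs' : M - ub s ≤ 0 := hMs
      have hy0 : 0 ≤ lb s := hlbn s (Set.Icc_subset_Ici_self hs)
      have hMx : M ≤ ub s := by linarith [hMs']
      have key := ineq_upper (χp := max χ 0) (P := a₀p s) (Q := a₁m s)
        (R := κ * max (a₂m s) 0) (S := κ * max (-(a₂m s)) 0)
        (Sb := Sb) (J := J) (M := M) (cx := ub s) (cy := lb s)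
        hχ0 hy0 hM0 hMx (hR0 s) (hSble s) (hJle s hs.1) hJpos hSbJM
      have hws : 0 ≤ ub s - lb s := hordn s (Set.Icc_subset_Ici_self hs)
      beta_reduce
      linarith [key]
    intro t ht
    exact ⟨hlbn t ht, by linarith [hordn t ht], by linarith [hubM t ht]⟩
  -- ===================== PART 1 : existence via the clamped system ==================
  set X1 := M + 1 with hX1def
  have hX1ge1 : 1 ≤ X1 := by rw [hX1def]; linarith
  have hX10 : 0 ≤ X1 := by linarith
  set CB := X1 * (2*(max χ 0)*X1 + A + A*X1 + 2*B*X1) with hCBdef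
  set Lc := ((2*(max χ 0)*X1 + A + A*X1 + 2*B*X1) + X1*((max χ 0)+A+B)) + X1*((max χ 0)+B)
    with hLcdef
  have hLc0 : 0 ≤ Lc := by rw [hLcdef]; positivity
  have hFcb : ∀ t p, ‖Fcomp χ κ a₀m a₀p a₁m a₁p a₂m a₂p X1 t p‖ ≤ CB := by
    intro t p
    have h1 : |clf X1 p.1 * (max χ 0 * (clf X1 p.1 - clf X1 p.2) + a₀p t
        - a₁m t * clf X1 p.1 - κ * max (a₂m t) 0 * clf X1 p.2
        + κ * max (-(a₂m t)) 0 * clf X1 p.1)| ≤ X1 * (2*(max χ 0)*X1 + A + A*X1 + 2*B*X1) :=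
      abs_mul_le' (clf_abs_le hX1ge1 _)
        (H_abs_le hχ0 hA0 hB0 hX10 (clf_abs_le hX1ge1 _) (clf_abs_le hX1ge1 _)
          (ha0p t) (ha1m t) (hRabs t) (hSabs t))
    have h2 : |clf X1 p.2 * (max χ 0 * (clf X1 p.2 - clf X1 p.1) + a₀m t
        - a₁p t * clf X1 p.2 - κ * max (a₂p t) 0 * clf X1 p.1
        + κ * max (-(a₂p t)) 0 * clf X1 p.2)| ≤ X1 * (2*(max χ 0)*X1 + A + A*X1 + 2*B*X1) :=
      abs_mul_le' (clf_abs_le hX1ge1 _)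
        (H_abs_le hχ0 hA0 hB0 hX10 (clf_abs_le hX1ge1 _) (clf_abs_le hX1ge1 _)
          (ha0m t) (ha1p t) (hR'abs t) (hS'abs t))
    rw [hCBdef]
    simp only [Fcomp, Prod.norm_def, Real.norm_eq_abs]
    exact max_le h1 h2
  have hFlip : ∀ t, LipschitzWith (Real.toNNReal Lc) (Fcomp χ κ a₀m a₀p a₁m a₁p a₂m a₂p X1 t) := by
    intro t
    apply LipschitzWith.of_dist_le_mul
    intro p q
    rw [Real.coe_toNNReal _ hLc0, Prod.dist_eq, Prod.dist_eq]
    simp only [Fcomp, Real.dist_eq]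
    have hd0 : 0 ≤ max |p.1 - q.1| |p.2 - q.2| := le_trans (abs_nonneg _) (le_max_left _ _)
    have l1 : |clf X1 p.1 - clf X1 q.1| ≤ max |p.1 - q.1| |p.2 - q.2| :=
      (clf_lip hX1ge1 _ _).trans (le_max_left _ _)
    have l2 : |clf X1 p.2 - clf X1 q.2| ≤ max |p.1 - q.1| |p.2 - q.2| :=
      (clf_lip hX1ge1 _ _).trans (le_max_right _ _)
    apply max_le
    · have key := comp_lip (χp := max χ 0) (A := A) (B := B) (X := X1)
        (P := a₀p t) (Q := a₁m t) (R := κ * max (a₂m t) 0) (S := κ * max (-(a₂m t)) 0)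
        (u := clf X1 p.1) (v := clf X1 p.2) (u' := clf X1 q.1) (v' := clf X1 q.2)
        hχ0 hA0 hB0 hX10 (ha0p t) (ha1m t) (hRabs t) (hSabs t)
        (clf_abs_le hX1ge1 _) (clf_abs_le hX1ge1 _) (clf_abs_le hX1ge1 _) (clf_abs_le hX1ge1 _)
      have m1 : ((2*(max χ 0)*X1 + A + A*X1 + 2*B*X1) + X1*((max χ 0)+A+B))
            * |clf X1 p.1 - clf X1 q.1|
          ≤ ((2*(max χ 0)*X1 + A + A*X1 + 2*B*X1) + X1*((max χ 0)+A+B))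
            * max |p.1 - q.1| |p.2 - q.2| :=
        mul_le_mul_of_nonneg_left l1 (by positivity)
      have m2 : X1*((max χ 0)+B) * |clf X1 p.2 - clf X1 q.2|
          ≤ X1*((max χ 0)+B) * max |p.1 - q.1| |p.2 - q.2| :=
        mul_le_mul_of_nonneg_left l2 (by positivity)
      rw [hLcdef]
      linarith [key, m1, m2]
    · have key := comp_lip (χp := max χ 0) (A := A) (B := B) (X := X1)
        (P := a₀m t) (Q := a₁p t) (R := κ * max (a₂p t) 0) (S := κ * max (-(a₂p t)) 0)
        (u := clf X1 p.2) (v := clf X1 p.1) (u' := clf X1 q.2) (v' := clf X1 q.1)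
        hχ0 hA0 hB0 hX10 (ha0m t) (ha1p t) (hR'abs t) (hS'abs t)
        (clf_abs_le hX1ge1 _) (clf_abs_le hX1ge1 _) (clf_abs_le hX1ge1 _) (clf_abs_le hX1ge1 _)
      have m1 : ((2*(max χ 0)*X1 + A + A*X1 + 2*B*X1) + X1*((max χ 0)+A+B))
            * |clf X1 p.2 - clf X1 q.2|
          ≤ ((2*(max χ 0)*X1 + A + A*X1 + 2*B*X1) + X1*((max χ 0)+A+B))
            * max |p.1 - q.1| |p.2 - q.2| :=
        mul_le_mul_of_nonneg_left l2 (by positivity)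
      have m2 : X1*((max χ 0)+B) * |clf X1 p.1 - clf X1 q.1|
          ≤ X1*((max χ 0)+B) * max |p.1 - q.1| |p.2 - q.2| :=
        mul_le_mul_of_nonneg_left l1 (by positivity)
      rw [hLcdef]
      linarith [key, m1, m2]
  have hFcont : ∀ p, Continuous fun t => Fcomp χ κ a₀m a₀p a₁m a₁p a₂m a₂p X1 t p := by
    intro p
    have c0 := h₀.1
    have c0' := h₀'.1
    have c1 := h₁.1
    have c1' := h₁'.1
    have c2 := h₂.1
    have c2' := h₂'.1
    simp only [Fcomp]
    apply Continuous.prodMk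
    · exact continuous_const.mul
        ((((continuous_const.add c0').sub (c1.mul continuous_const)).sub
          ((continuous_const.mul (c2.max continuous_const)).mul continuous_const)).add
          ((continuous_const.mul (c2.neg.max continuous_const)).mul continuous_const))
    · exact continuous_const.mul
        ((((continuous_const.add c0).sub (c1'.mul continuous_const)).sub
          ((continuous_const.mul (c2'.max continuous_const)).mul continuous_const)).add
          ((continuous_const.mul (c2'.neg.max continuous_const)).mul continuous_const))
  obtain ⟨u, hu0, hud⟩ := global_solution (Fcomp χ κ a₀m a₀p a₁m a₁p a₂m a₂p X1)
    CB (Real.toNNReal Lc) hFcb hFlip hFcont t₀ ((ub₀, lb₀) : ℝ × ℝ)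
  have hud1 : ∀ t ∈ Set.Ici t₀, HasDerivWithinAt (fun s => (u s).1)
      ((Fcomp χ κ a₀m a₀p a₁m a₁p a₂m a₂p X1 t (u t)).1) (Set.Ici t₀) t := by
    intro t ht
    have := (ContinuousLinearMap.fst ℝ ℝ ℝ).hasFDerivAt.comp_hasDerivWithinAt t (hud t ht)
    exact this
  have hud2 : ∀ t ∈ Set.Ici t₀, HasDerivWithinAt (fun s => (u s).2)
      ((Fcomp χ κ a₀m a₀p a₁m a₁p a₂m a₂p X1 t (u t)).2) (Set.Ici t₀) t := by
    intro t ht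
    have := (ContinuousLinearMap.snd ℝ ℝ ℝ).hasFDerivAt.comp_hasDerivWithinAt t (hud t ht)
    exact this
  -- invariance for the clamped system
  have hlbc : ∀ t ∈ Set.Ici t₀, 0 ≤ (u t).2 := by
    refine nonneg_of_deriv_ge (f := fun s => (u s).2)
      (f' := fun t => (Fcomp χ κ a₀m a₀p a₁m a₁p a₂m a₂p X1 t (u t)).2)
      hud2 (by show 0 ≤ (u t₀).2; rw [hu0]; exact hlb₀) ?_
    intro T hT
    refine ⟨2*(max χ 0)*X1 + A + A*X1 + 2*B*X1, by positivity, ?_⟩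
    intro s hs hy
    have hy' : (u s).2 ≤ 0 := hy
    have key := ineq_sign (χp := max χ 0) (A := A) (B := B) (X := X1)
      (y := (u s).2) (cy := clf X1 (u s).2) (cx := clf X1 (u s).1)
      (P' := a₀m s) (Q' := a₁p s) (R' := κ * max (a₂p s) 0) (S' := κ * max (-(a₂p s)) 0)
      hχ0 hA0 hB0 hX10 hy' (clf_of_nonpos hX1ge1 hy').1 (clf_of_nonpos hX1ge1 hy').2
      (clf_abs_le hX1ge1 _) (clf_abs_le hX1ge1 _)
      (ha0m s) (hQ'0 s) (hQ'A s) (hR'0 s) (hR'B s) (hS'0 s) ((hSS s).trans (hSB s))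
    beta_reduce
    simp only [Fcomp]
    linarith [key]
  have hordc : ∀ t ∈ Set.Ici t₀, 0 ≤ (u t).1 - (u t).2 := by
    refine nonneg_of_deriv_ge (f := fun s => (u s).1 - (u s).2)
      (f' := fun t => (Fcomp χ κ a₀m a₀p a₁m a₁p a₂m a₂p X1 t (u t)).1
        - (Fcomp χ κ a₀m a₀p a₁m a₁p a₂m a₂p X1 t (u t)).2)
      (fun t ht => (hud1 t ht).sub (hud2 t ht))
      (by show 0 ≤ (u t₀).1 - (u t₀).2; rw [hu0]; show (0:ℝ) ≤ ub₀ - lb₀; linarith) ?_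
    intro T hT
    refine ⟨(2*(max χ 0)*X1 + A + A*X1 + 2*B*X1) + X1*(2*(max χ 0) + 4*B)
      + (4*(max χ 0)*X1 + 2*A + 2*A*X1 + 4*B*X1), by positivity, ?_⟩
    intro s hs hw
    have hw' : (u s).1 - (u s).2 ≤ 0 := hw
    have hy0 : 0 ≤ (u s).2 := hlbc s (Set.Icc_subset_Ici_self hs)
    have hwcx : (u s).1 - (u s).2 ≤ clf X1 (u s).1 := by
      rcases le_total 0 ((u s).1) with h | h
      · have := clf_nonneg hX1ge1 h; linarith
      · have := (clf_of_nonpos hX1ge1 h).1; linarith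
    have hwdc : (u s).1 - (u s).2 ≤ clf X1 (u s).1 - clf X1 (u s).2 := by
      have := clf_diff_le hX1ge1 (show (u s).1 ≤ (u s).2 by linarith)
      linarith
    have key := ineq_order (χp := max χ 0) (A := A) (B := B) (X := X1)
      (x := (u s).1) (y := (u s).2) (cx := clf X1 (u s).1) (cy := clf X1 (u s).2)
      (P := a₀p s) (P' := a₀m s) (Q := a₁m s) (Q' := a₁p s)
      (R := κ * max (a₂m s) 0) (R' := κ * max (a₂p s) 0)
      (S := κ * max (-(a₂m s)) 0) (S' := κ * max (-(a₂p s)) 0)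
      hχ0 hA0 hB0 hX10 hw' (clf_nonneg hX1ge1 hy0) (clf_abs_le hX1ge1 _) (clf_abs_le hX1ge1 _)
      (clf_mono hX1ge1 (by linarith)) hwcx hwdc
      (ha0p s) (ha0m s) (hle₀ s) (h₁nonneg s) (hle₁ s) (hQ'A s)
      (hR0 s) (hRR s) (hR'B s) (hS'0 s) (hSS s) (hSB s)
    beta_reduce
    simp only [Fcomp]
    linarith [key]
  have hubc : ∀ t ∈ Set.Ici t₀, 0 ≤ M - (u t).1 := by
    refine nonneg_of_deriv_ge (f := fun s => M - (u s).1)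
      (f' := fun t => -((Fcomp χ κ a₀m a₀p a₁m a₁p a₂m a₂p X1 t (u t)).1))
      (fun t ht => (hud1 t ht).const_sub M)
      (by show 0 ≤ M - (u t₀).1; rw [hu0]; show (0:ℝ) ≤ M - ub₀; linarith) ?_
    intro T hT
    refine ⟨0, le_rfl, ?_⟩
    intro s hs hMs
    have hMs' : M - (u s).1 ≤ 0 := hMs
    have hy0 : 0 ≤ (u s).2 := hlbc s (Set.Icc_subset_Ici_self hs)
    have key := ineq_upper (χp := max χ 0) (P := a₀p s) (Q := a₁m s)
      (R := κ * max (a₂m s) 0) (S := κ * max (-(a₂m s)) 0)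
      (Sb := Sb) (J := J) (M := M) (cx := clf X1 (u s).1) (cy := clf X1 (u s).2)
      hχ0 (clf_nonneg hX1ge1 hy0) hM0
      (clf_ge hX1ge1 hM0 (by linarith) (by linarith)) (hR0 s) (hSble s)
      (hJle s hs.1) hJpos hSbJM
    beta_reduce
    simp only [Fcomp]
    linarith [key]
  refine ⟨⟨fun t => (u t).1, fun t => (u t).2, by show (u t₀).1 = ub₀; rw [hu0], by show (u t₀).2 = lb₀; rw [hu0], ?_⟩, hinv⟩
  intro t ht
  have hy0 := hlbc t ht
  have hw0 := hordc t ht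
  have hx0 : 0 ≤ (u t).1 := by linarith
  have hxM : (u t).1 ≤ M := by linarith [hubc t ht]
  have hyM : (u t).2 ≤ M := by linarith
  have e1 : clf X1 (u t).1 = (u t).1 := clf_id hX1ge1 hx0 (by linarith)
  have e2 : clf X1 (u t).2 = (u t).2 := clf_id hX1ge1 hy0 (by linarith)
  constructor
  · have h := hud1 t ht
    have hval : (Fcomp χ κ a₀m a₀p a₁m a₁p a₂m a₂p X1 t (u t)).1
        = max χ 0 * (u t).1 * ((u t).1 - (u t).2) +
          (u t).1 * (a₀p t - a₁m t * (u t).1 - κ * max (a₂m t) 0 * (u t).2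
            + κ * max (-(a₂m t)) 0 * (u t).1) := by
      simp only [Fcomp, e1, e2]; ring
    rwa [hval] at h
  · have h := hud2 t ht
    have hval : (Fcomp χ κ a₀m a₀p a₁m a₁p a₂m a₂p X1 t (u t)).2
        = max χ 0 * (u t).2 * ((u t).2 - (u t).1) +
          (u t).2 * (a₀m t - a₁p t * (u t).2 - κ * max (a₂p t) 0 * (u t).1
            + κ * max (-(a₂p t)) 0 * (u t).2) := by
      simp only [Fcomp, e1, e2]; ring
    rwa [hval] at h
end

section
/- Let κ > 0 and let a₀, a₁, a₂ : ℝ → ℝ be continuous and bounded with inf_{t∈ℝ} a₀(t) > 0 and inf_{t∈ℝ} {a₁(t) − κ(a₂(t))₋} > 0. Then the ODE u' = u(a₀(t) − (a₁(t) + κ a₂(t))u), which governs the spatially homogeneous solutions of the parabolic-elliptic chemotaxis system on a domain of measure κ, has exactly one entire solution u* that is bounded and satisfies inf_{t∈ℝ} u*(t) > 0; moreover, if a₀, a₁, a₂ are all periodic with period T > 0, then u* is periodic with period T, and if a₀, a₁, a₂ are almost periodic, then u* is almost periodic. -/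
open Real Set MeasureTheory intervalIntegral Filter

/-- A continuous function `f : ℝ → ℝ` is (Bohr) almost periodic: for every `ε > 0` the set of
`ε`-periods of `f` is relatively dense in `ℝ`. -/
def BohrAlmostPeriodic (f : ℝ → ℝ) : Prop :=
  Continuous f ∧
    ∀ ε > 0, ∃ l > 0, ∀ s : ℝ, ∃ τ ∈ Set.Icc s (s + l), ∀ t : ℝ, |f (t + τ) - f t| < ε


lemma abs_exp_sub_exp_le {x y c : ℝ} (hx : x ≤ c) (hy : y ≤ c) :
    |Real.exp x - Real.exp y| ≤ Real.exp c * |x - y| := by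
  have key : ∀ u v : ℝ, u ≤ v → v ≤ c → Real.exp v - Real.exp u ≤ Real.exp c * (v - u) := by
    intro u v huv hvc
    have h1 := Real.add_one_le_exp (u - v)
    have h2 : Real.exp (u - v) * Real.exp v = Real.exp u := by
      rw [← Real.exp_add]; ring_nf
    have h3 : Real.exp v ≤ Real.exp c := Real.exp_le_exp.2 hvc
    nlinarith [Real.exp_pos v, Real.exp_pos c]
  rcases le_total x y with h | h
  · rw [abs_sub_comm, abs_of_nonneg (sub_nonneg.2 (Real.exp_le_exp.2 h)), abs_sub_comm,
      abs_of_nonneg (sub_nonneg.2 h)]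
    exact key x y h hy
  · rw [abs_of_nonneg (sub_nonneg.2 (Real.exp_le_exp.2 h)), abs_of_nonneg (sub_nonneg.2 h)]
    exact key y x h hx

-- translation of set integrals
lemma setIntegral_Iic_add_right (f : ℝ → ℝ) (τ c : ℝ) :
    ∫ s in Iic c, f (s + τ) = ∫ s in Iic (c + τ), f s := by
  have A : MeasurableEmbedding (fun x : ℝ => x + τ) :=
    (Homeomorph.addRight τ).isClosedEmbedding.measurableEmbedding
  have := A.setIntegral_map (μ := volume) f (Iic (c + τ))
  rw [map_add_right_eq_self (volume : Measure ℝ) τ] at this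
  have h2 : (fun x : ℝ => x + τ) ⁻¹' Iic (c + τ) = Iic c := by
    ext x; simp
  rw [h2] at this
  exact this.symm

lemma integrableOn_Iic_add_right_iff (f : ℝ → ℝ) (τ c : ℝ) :
    IntegrableOn (fun s => f (s + τ)) (Iic c) ↔ IntegrableOn f (Iic (c + τ)) := by
  have A : MeasurableEmbedding (fun x : ℝ => x + τ) :=
    (Homeomorph.addRight τ).isClosedEmbedding.measurableEmbedding
  have h1 : (Measure.map (fun x : ℝ => x + τ) volume).restrict (Iic (c + τ))
      = Measure.map (fun x : ℝ => x + τ) (volume.restrict ((fun x : ℝ => x + τ) ⁻¹' Iic (c + τ))) :=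
    A.restrict_map _ _
  have h2 : (fun x : ℝ => x + τ) ⁻¹' Iic (c + τ) = Iic c := by
    ext x; simp
  rw [map_add_right_eq_self (volume : Measure ℝ) τ, h2] at h1
  unfold IntegrableOn
  rw [h1, A.integrable_map_iff]
  rfl

-- generic translation lemmas
lemma setIntegral_comp_add_right' (f : ℝ → ℝ) (τ : ℝ) (s : Set ℝ) :
    ∫ x in (fun x : ℝ => x + τ) ⁻¹' s, f (x + τ) = ∫ x in s, f x := by
  have A : MeasurableEmbedding (fun x : ℝ => x + τ) :=
    (Homeomorph.addRight τ).isClosedEmbedding.measurableEmbedding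
  have := A.setIntegral_map (μ := volume) f s
  rw [map_add_right_eq_self (volume : Measure ℝ) τ] at this
  exact this.symm

lemma integrableOn_comp_add_right_iff (f : ℝ → ℝ) (τ : ℝ) (s : Set ℝ) :
    IntegrableOn (fun x => f (x + τ)) ((fun x : ℝ => x + τ) ⁻¹' s) ↔ IntegrableOn f s := by
  have A : MeasurableEmbedding (fun x : ℝ => x + τ) :=
    (Homeomorph.addRight τ).isClosedEmbedding.measurableEmbedding
  have h1 := A.restrict_map (μ := volume) s
  rw [map_add_right_eq_self (volume : Measure ℝ) τ] at h1
  unfold IntegrableOn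
  rw [h1, A.integrable_map_iff]
  rfl

lemma integrableOn_comp_neg_iff' (f : ℝ → ℝ) (s : Set ℝ) :
    IntegrableOn (fun x => f (-x)) ((fun x : ℝ => -x) ⁻¹' s) ↔ IntegrableOn f s := by
  have A : MeasurableEmbedding (fun x : ℝ => -x) :=
    (Homeomorph.neg ℝ).isClosedEmbedding.measurableEmbedding
  have h1 := A.restrict_map (μ := volume) s
  rw [Measure.map_neg_eq_self (volume : Measure ℝ)] at h1
  unfold IntegrableOn
  rw [h1, A.integrable_map_iff]
  rfl

lemma integrableOn_Iic_comp_sub (f : ℝ → ℝ) (t : ℝ) (hf : IntegrableOn f (Ioi 0)) :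
    IntegrableOn (fun s => f (t - s)) (Iic t) := by
  have hIci : IntegrableOn f (Ici 0) := by
    rwa [integrableOn_Ici_iff_integrableOn_Ioi]
  have h1 : IntegrableOn (fun y => f (y + t)) (Ici (-t)) := by
    have := (integrableOn_comp_add_right_iff f t (Ici 0)).2 hIci
    have hpre : (fun x : ℝ => x + t) ⁻¹' (Ici 0) = Ici (-t) := by
      ext x; simp
    rwa [hpre] at this
  have h2 : IntegrableOn (fun x => (fun y => f (y + t)) (-x)) (Iic t) := by
    have := (integrableOn_comp_neg_iff' (fun y => f (y + t)) (Ici (-t))).2 h1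
    have hpre : (fun x : ℝ => -x) ⁻¹' (Ici (-t)) = Iic t := by
      ext x; simp
    rwa [hpre] at this
  apply h2.congr_fun _ measurableSet_Iic
  intro x _; simp [sub_eq_add_neg, add_comm]

lemma integral_Iic_comp_sub (f : ℝ → ℝ) (t : ℝ) :
    ∫ s in Iic t, f (t - s) = ∫ x in Ioi 0, f x := by
  have h1 : ∫ s in Iic t, f (t - s) = ∫ s in Iic t, (fun y => f (t + y)) (-s) := by
    apply setIntegral_congr_fun measurableSet_Iic
    intro s _; simp [sub_eq_add_neg]
  rw [h1, integral_comp_neg_Iic (f := fun y => f (t + y))]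
  have h2 : ∫ y in Ioi (-t), f (t + y) = ∫ y in Ioi (-t), (fun x => f (x + t)) y := by
    apply setIntegral_congr_fun measurableSet_Ioi
    intro y _; simp [add_comm]
  rw [h2]
  have hpre : (fun x : ℝ => x + t) ⁻¹' (Ioi 0) = Ioi (-t) := by
    ext x; simp
  rw [← hpre, setIntegral_comp_add_right' f t (Ioi 0)]

variable {α : ℝ}

lemma tendsto_exp_neg_mul (hα : 0 < α) :
    Tendsto (fun x : ℝ => Real.exp (-(α * x))) atTop (nhds 0) := by
  apply Real.tendsto_exp_atBot.comp
  have : Tendsto (fun x : ℝ => α * x) atTop atTop := tendsto_id.const_mul_atTop hα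
  exact tendsto_neg_atBot_iff.2 this

lemma tendsto_mul_exp_neg_mul (hα : 0 < α) :
    Tendsto (fun x : ℝ => (α * x) * Real.exp (-(α * x))) atTop (nhds 0) := by
  have h := (tendsto_pow_mul_exp_neg_atTop_nhds_zero 1).comp
    (tendsto_id.const_mul_atTop hα (f := fun x : ℝ => x))
  simpa [Function.comp_def] using h

lemma hasDerivAt_exp_aux (h : α ≠ 0) (x : ℝ) :
    HasDerivAt (fun x : ℝ => -(Real.exp (-(α * x)) / α)) (Real.exp (-(α * x))) x := by
  have h1 : HasDerivAt (fun x : ℝ => -(α * x)) (-α) x := by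
    have := ((hasDerivAt_id x).const_mul α).neg
    simp only [mul_one] at this
    exact this
  have h2 : HasDerivAt (fun x => -(Real.exp (-(α * x)) / α)) _ x := (h1.exp.div_const α).neg
  convert h2 using 1
  field_simp

lemma integrableOn_exp_neg_mul (hα : 0 < α) :
    IntegrableOn (fun x : ℝ => Real.exp (-(α * x))) (Ioi 0) := by
  have := exp_neg_integrableOn_Ioi 0 hα
  apply this.congr_fun _ measurableSet_Ioi
  intro x _; ring_nf

lemma integral_exp_neg_mul (hα : 0 < α) :
    ∫ x in Ioi (0:ℝ), Real.exp (-(α * x)) = 1 / α := by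
  have hT : Tendsto (fun x : ℝ => -(Real.exp (-(α * x)) / α)) atTop (nhds 0) := by
    have := (tendsto_exp_neg_mul hα).div_const α
    simpa using this.neg
  have := integral_Ioi_of_hasDerivAt_of_tendsto' (m := 0)
    (fun x _ => hasDerivAt_exp_aux (α := α) hα.ne' x) (integrableOn_exp_neg_mul hα) hT
  rw [this]; simp [hα.ne']

lemma hasDerivAt_mul_exp_aux (hα : 0 < α) (x : ℝ) :
    HasDerivAt (fun x : ℝ => -((x / α + 1 / α ^ 2) * Real.exp (-(α * x))))
      (x * Real.exp (-(α * x))) x := by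
  have h1 : HasDerivAt (fun x : ℝ => -(α * x)) (-α) x := by
    have := ((hasDerivAt_id x).const_mul α).neg
    simp only [mul_one] at this
    exact this
  have hlin : HasDerivAt (fun x : ℝ => x / α + 1 / α ^ 2) (1 / α) x :=
    ((hasDerivAt_id x).div_const α).add_const _
  have h2 : HasDerivAt (fun x => -((x / α + 1 / α ^ 2) * Real.exp (-(α * x)))) _ x :=
    (hlin.mul h1.exp).neg
  convert h2 using 1
  have := Real.exp_pos (-(α * x))
  field_simp
  ring

lemma tendsto_mul_exp_aux (hα : 0 < α) :
    Tendsto (fun x : ℝ => -((x / α + 1 / α ^ 2) * Real.exp (-(α * x)))) atTop (nhds 0) := by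
  have h1 := ((tendsto_mul_exp_neg_mul hα).add (tendsto_exp_neg_mul hα)).const_mul (1 / α ^ 2)
  have heq : (fun x : ℝ => -((x / α + 1 / α ^ 2) * Real.exp (-(α * x))))
      = fun x : ℝ => -((1 / α ^ 2) * ((α * x) * Real.exp (-(α * x)) + Real.exp (-(α * x)))) := by
    funext x; field_simp
  rw [heq]
  simpa using h1.neg

lemma integrableOn_mul_exp_neg_mul (hα : 0 < α) :
    IntegrableOn (fun x : ℝ => x * Real.exp (-(α * x))) (Ioi 0) := by
  apply integrableOn_Ioi_deriv_of_nonneg' (fun x _ => hasDerivAt_mul_exp_aux hα x)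
    (fun x hx => mul_nonneg (le_of_lt hx) (Real.exp_pos _).le) (tendsto_mul_exp_aux hα)

lemma integral_mul_exp_neg_mul (hα : 0 < α) :
    ∫ x in Ioi (0:ℝ), x * Real.exp (-(α * x)) = 1 / α ^ 2 := by
  have := integral_Ioi_of_hasDerivAt_of_tendsto' (m := 0)
    (fun x _ => hasDerivAt_mul_exp_aux hα x) (integrableOn_mul_exp_neg_mul hα)
    (tendsto_mul_exp_aux hα)
  rw [this]; simp [hα.ne']


noncomputable def Aint (a : ℝ → ℝ) (t : ℝ) : ℝ := ∫ x in (0:ℝ)..t, a x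

noncomputable def vsol (a b : ℝ → ℝ) (t : ℝ) : ℝ :=
  ∫ s in Iic t, Real.exp (Aint a s - Aint a t) * b s

variable {a b : ℝ → ℝ} {α β m M : ℝ}

lemma Aint_hasDerivAt (ha : Continuous a) (t : ℝ) : HasDerivAt (Aint a) (a t) t :=
  intervalIntegral.integral_hasDerivAt_right (ha.intervalIntegrable 0 t)
    ha.stronglyMeasurable.stronglyMeasurableAtFilter ha.continuousAt

lemma Aint_continuous (ha : Continuous a) : Continuous (Aint a) :=
  continuous_iff_continuousAt.2 fun t => (Aint_hasDerivAt ha t).continuousAt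

lemma Aint_sub (ha : Continuous a) (s t : ℝ) :
    Aint a t - Aint a s = ∫ x in s..t, a x := by
  have h := intervalIntegral.integral_add_adjacent_intervals (μ := volume)
    (ha.intervalIntegrable 0 s) (ha.intervalIntegrable s t)
  unfold Aint
  linarith [h]

lemma Aint_sub_le (ha : Continuous a) (haβ : ∀ t, a t ≤ β) {s t : ℝ} (hst : s ≤ t) :
    Aint a t - Aint a s ≤ β * (t - s) := by
  rw [Aint_sub ha]
  calc ∫ x in s..t, a x ≤ ∫ _x in s..t, β := by
        apply intervalIntegral.integral_mono_on hst (ha.intervalIntegrable s t)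
          (intervalIntegrable_const) (fun x _ => haβ x)
    _ = β * (t - s) := by simp [mul_comm]
 
lemma Aint_sub_ge (ha : Continuous a) (hαa : ∀ t, α ≤ a t) {s t : ℝ} (hst : s ≤ t) :
    α * (t - s) ≤ Aint a t - Aint a s := by
  rw [Aint_sub ha]
  calc α * (t - s) = ∫ _x in s..t, α := by simp [mul_comm]
    _ ≤ ∫ x in s..t, a x := by
        apply intervalIntegral.integral_mono_on hst intervalIntegrable_const
          (ha.intervalIntegrable s t) (fun x _ => hαa x)

lemma vsol_integrableOn (ha : Continuous a) (hα : 0 < α) (hαa : ∀ t, α ≤ a t)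
    (hb : Continuous b) (hbM : ∀ t, |b t| ≤ M) (t : ℝ) :
    IntegrableOn (fun s => Real.exp (Aint a s - Aint a t) * b s) (Iic t) := by
  have hg : IntegrableOn (fun s => M * Real.exp (-(α * (t - s)))) (Iic t) :=
    (integrableOn_Iic_comp_sub (fun x => Real.exp (-(α * x))) t
      (integrableOn_exp_neg_mul hα)).const_mul M
  apply Integrable.mono' hg
  · exact (((Aint_continuous ha).sub continuous_const).rexp.mul hb).aestronglyMeasurable
  · refine (ae_restrict_iff' measurableSet_Iic).2 (ae_of_all _ fun s hs => ?_)
    have hs' : s ≤ t := hs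
    have h1 : Aint a s - Aint a t ≤ -(α * (t - s)) := by
      have := Aint_sub_ge ha hαa hs'
      linarith
    have h2 : Real.exp (Aint a s - Aint a t) ≤ Real.exp (-(α * (t - s))) :=
      Real.exp_le_exp.2 h1
    have h3 : (0:ℝ) ≤ M := le_trans (abs_nonneg _) (hbM 0)
    rw [norm_mul, Real.norm_eq_abs, Real.norm_eq_abs, abs_of_pos (Real.exp_pos _)]
    calc Real.exp (Aint a s - Aint a t) * |b s| ≤ Real.exp (-(α * (t - s))) * M := by
          apply mul_le_mul h2 (hbM s) (abs_nonneg _) (Real.exp_pos _).le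
      _ = M * Real.exp (-(α * (t - s))) := by ring

lemma vsol_le (ha : Continuous a) (hα : 0 < α) (hαa : ∀ t, α ≤ a t)
    (hb : Continuous b) (hbM : ∀ t, |b t| ≤ M) (t : ℝ) :
    vsol a b t ≤ M / α := by
  have hg : IntegrableOn (fun s => M * Real.exp (-(α * (t - s)))) (Iic t) :=
    (integrableOn_Iic_comp_sub (fun x => Real.exp (-(α * x))) t
      (integrableOn_exp_neg_mul hα)).const_mul M
  have hint := vsol_integrableOn ha hα hαa hb hbM t
  have h3 : (0:ℝ) ≤ M := le_trans (abs_nonneg _) (hbM 0)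
  have hmono : vsol a b t ≤ ∫ s in Iic t, M * Real.exp (-(α * (t - s))) := by
    apply setIntegral_mono_on hint hg measurableSet_Iic
    intro s hs
    have hs' : s ≤ t := hs
    have h1 : Aint a s - Aint a t ≤ -(α * (t - s)) := by
      have := Aint_sub_ge ha hαa hs'; linarith
    calc Real.exp (Aint a s - Aint a t) * b s
        ≤ Real.exp (Aint a s - Aint a t) * M := by
          apply mul_le_mul_of_nonneg_left (le_trans (le_abs_self _) (hbM s)) (Real.exp_pos _).le
      _ ≤ Real.exp (-(α * (t - s))) * M :=
          mul_le_mul_of_nonneg_right (Real.exp_le_exp.2 h1) h3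
      _ = M * Real.exp (-(α * (t - s))) := by ring
  calc vsol a b t ≤ ∫ s in Iic t, M * Real.exp (-(α * (t - s))) := hmono
    _ = M * ∫ s in Iic t, Real.exp (-(α * (t - s))) := by rw [MeasureTheory.integral_const_mul]
    _ = M * (1 / α) := by
        rw [integral_Iic_comp_sub (fun x => Real.exp (-(α * x))) t, integral_exp_neg_mul hα]
    _ = M / α := by ring

lemma vsol_ge (ha : Continuous a) (hβ : 0 < β) (haβ : ∀ t, a t ≤ β)
    (hb : Continuous b) (hm : 0 ≤ m) (hmb : ∀ t, m ≤ b t) (t : ℝ)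
    (hint : IntegrableOn (fun s => Real.exp (Aint a s - Aint a t) * b s) (Iic t)) :
    m / β ≤ vsol a b t := by
  have hg : IntegrableOn (fun s => m * Real.exp (-(β * (t - s)))) (Iic t) :=
    (integrableOn_Iic_comp_sub (fun x => Real.exp (-(β * x))) t
      (integrableOn_exp_neg_mul hβ)).const_mul m
  have hmono : (∫ s in Iic t, m * Real.exp (-(β * (t - s)))) ≤ vsol a b t := by
    apply setIntegral_mono_on hg hint measurableSet_Iic
    intro s hs
    have hs' : s ≤ t := hs
    have h1 : -(β * (t - s)) ≤ Aint a s - Aint a t := by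
      have := Aint_sub_le ha haβ hs'; linarith
    calc m * Real.exp (-(β * (t - s))) ≤ m * Real.exp (Aint a s - Aint a t) :=
          mul_le_mul_of_nonneg_left (Real.exp_le_exp.2 h1) hm
      _ ≤ Real.exp (Aint a s - Aint a t) * b s := by
          rw [mul_comm]
          exact mul_le_mul_of_nonneg_left (hmb s) (Real.exp_pos _).le
  calc m / β = m * (1 / β) := by ring
    _ = m * ∫ s in Iic t, Real.exp (-(β * (t - s))) := by
        rw [integral_Iic_comp_sub (fun x => Real.exp (-(β * x))) t, integral_exp_neg_mul hβ]
    _ = ∫ s in Iic t, m * Real.exp (-(β * (t - s))) := by rw [MeasureTheory.integral_const_mul]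
    _ ≤ vsol a b t := hmono




noncomputable def Fint (a b : ℝ → ℝ) (t : ℝ) : ℝ :=
  ∫ s in Iic t, Real.exp (Aint a s) * b s


variable {a b a' b' : ℝ → ℝ} {α β m M η η' : ℝ}

lemma Fint_integrableOn (ha : Continuous a) (hα : 0 < α) (hαa : ∀ t, α ≤ a t)
    (hb : Continuous b) (hbM : ∀ t, |b t| ≤ M) (r : ℝ) :
    IntegrableOn (fun s => Real.exp (Aint a s) * b s) (Iic r) := by
  have h : IntegrableOn (fun s => Real.exp (Aint a s - Aint a r) * b s * Real.exp (Aint a r))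
      (Iic r) := (vsol_integrableOn ha hα hαa hb hbM r).mul_const _
  apply h.congr_fun _ measurableSet_Iic
  intro s _
  simp only
  rw [Real.exp_sub]
  field_simp

lemma vsol_eq_exp_mul_Fint (r : ℝ) :
    vsol a b r = Real.exp (-(Aint a r)) * Fint a b r := by
  unfold vsol Fint
  rw [← MeasureTheory.integral_const_mul]
  apply setIntegral_congr_fun measurableSet_Iic
  intro s _
  simp only
  rw [sub_eq_add_neg, Real.exp_add]
  ring

lemma Fint_hasDerivAt (ha : Continuous a) (hα : 0 < α) (hαa : ∀ t, α ≤ a t)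
    (hb : Continuous b) (hbM : ∀ t, |b t| ≤ M) (t : ℝ) :
    HasDerivAt (Fint a b) (Real.exp (Aint a t) * b t) t := by
  have hcont : Continuous (fun s => Real.exp (Aint a s) * b s) :=
    ((Aint_continuous ha).rexp).mul hb
  have key : Fint a b = fun r => Fint a b 0 + ∫ s in (0:ℝ)..r, Real.exp (Aint a s) * b s := by
    funext r
    have h := integral_Iic_sub_Iic (Fint_integrableOn ha hα hαa hb hbM 0)
      (Fint_integrableOn ha hα hαa hb hbM r)
    unfold Fint
    linarith [h]
  rw [key]
  exact (intervalIntegral.integral_hasDerivAt_right (hcont.intervalIntegrable 0 t)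
    hcont.stronglyMeasurable.stronglyMeasurableAtFilter hcont.continuousAt).const_add _

lemma vsol_hasDerivAt (ha : Continuous a) (hα : 0 < α) (hαa : ∀ t, α ≤ a t)
    (hb : Continuous b) (hbM : ∀ t, |b t| ≤ M) (t : ℝ) :
    HasDerivAt (vsol a b) (b t - a t * vsol a b t) t := by
  have hv : vsol a b = fun r => Real.exp (-(Aint a r)) * Fint a b r :=
    funext vsol_eq_exp_mul_Fint
  rw [hv]
  have h1 : HasDerivAt (fun r => Real.exp (-(Aint a r))) (Real.exp (-(Aint a t)) * (-(a t))) t :=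
    (Aint_hasDerivAt ha t).neg.exp
  have h2 := Fint_hasDerivAt ha hα hαa hb hbM t
  have h3 : HasDerivAt (fun r => Real.exp (-(Aint a r)) * Fint a b r) _ t := h1.mul h2
  convert h3 using 1
  show b t - a t * (Real.exp (-(Aint a t)) * Fint a b t)
      = Real.exp (-(Aint a t)) * (-(a t)) * Fint a b t
        + Real.exp (-(Aint a t)) * (Real.exp (Aint a t) * b t)
  rw [Real.exp_neg]
  have := Real.exp_pos (Aint a t)
  field_simp
  ring

lemma Aint_shift (ha : Continuous a) (τ s : ℝ) :
    Aint (fun x => a (x + τ)) s = Aint a (s + τ) - Aint a τ := by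
  show (∫ x in (0:ℝ)..s, a (x + τ)) = _
  rw [intervalIntegral.integral_comp_add_right (fun y => a y) τ, zero_add]
  rw [Aint_sub ha τ (s + τ)]

lemma vsol_shift (ha : Continuous a) (τ t : ℝ) :
    vsol (fun x => a (x + τ)) (fun x => b (x + τ)) t = vsol a b (t + τ) := by
  unfold vsol
  have h1 : ∀ s ∈ Iic t,
      Real.exp (Aint (fun x => a (x + τ)) s - Aint (fun x => a (x + τ)) t) * b (s + τ)
      = (fun y => Real.exp (Aint a y - Aint a (t + τ)) * b y) (s + τ) := by
    intro s _
    rw [Aint_shift ha, Aint_shift ha]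
    ring_nf
  rw [setIntegral_congr_fun measurableSet_Iic h1,
    setIntegral_Iic_add_right (fun y => Real.exp (Aint a y - Aint a (t + τ)) * b y) τ t]

lemma vsol_perturb (ha : Continuous a) (ha' : Continuous a') (hb : Continuous b)
    (hb' : Continuous b') (hα : 0 < α) (hαa : ∀ t, α ≤ a t) (hαa' : ∀ t, α ≤ a' t)
    (hbM : ∀ t, |b t| ≤ M) (hbM' : ∀ t, |b' t| ≤ M)
    (hη : ∀ t, |a t - a' t| ≤ η) (hη' : ∀ t, |b t - b' t| ≤ η') (t : ℝ) :
    |vsol a b t - vsol a' b' t| ≤ η' / α + M * η / α ^ 2 := by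
  have hη0 : 0 ≤ η := le_trans (abs_nonneg _) (hη 0)
  have hη'0 : 0 ≤ η' := le_trans (abs_nonneg _) (hη' 0)
  have hM0 : (0:ℝ) ≤ M := le_trans (abs_nonneg _) (hbM 0)
  have hint := vsol_integrableOn ha hα hαa hb hbM t
  have hint' := vsol_integrableOn ha' hα hαa' hb' hbM' t
  have hg1 : IntegrableOn (fun s => Real.exp (-(α * (t - s)))) (Iic t) :=
    integrableOn_Iic_comp_sub (fun x => Real.exp (-(α * x))) t (integrableOn_exp_neg_mul hα)
  have hg2 : IntegrableOn (fun s => (t - s) * Real.exp (-(α * (t - s)))) (Iic t) :=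
    integrableOn_Iic_comp_sub (fun x => x * Real.exp (-(α * x))) t
      (integrableOn_mul_exp_neg_mul hα)
  have hgint : IntegrableOn
      (fun s => η' * Real.exp (-(α * (t - s))) + M * η * ((t - s) * Real.exp (-(α * (t - s)))))
      (Iic t) := (hg1.const_mul η').add (hg2.const_mul (M * η))
  have key : |vsol a b t - vsol a' b' t| ≤ ∫ s in Iic t,
      (η' * Real.exp (-(α * (t - s))) + M * η * ((t - s) * Real.exp (-(α * (t - s))))) := by
    unfold vsol
    rw [← integral_sub hint hint']
    rw [← Real.norm_eq_abs]
    apply MeasureTheory.norm_integral_le_of_norm_le hgint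
    refine (ae_restrict_iff' measurableSet_Iic).2 (ae_of_all _ fun s hs => ?_)
    have hst : s ≤ t := hs
    set X := Aint a s - Aint a t with hX
    set X' := Aint a' s - Aint a' t with hX'
    have hXle : X ≤ -(α * (t - s)) := by
      have := Aint_sub_ge ha hαa hst; simp only [hX]; linarith
    have hX'le : X' ≤ -(α * (t - s)) := by
      have := Aint_sub_ge ha' hαa' hst; simp only [hX']; linarith
    have hXX' : |X - X'| ≤ η * (t - s) := by
      have hXeq : X - X' = ∫ x in s..t, (a' x - a x) := by
        rw [intervalIntegral.integral_sub (ha'.intervalIntegrable s t)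
          (ha.intervalIntegrable s t)]
        have e1 := Aint_sub ha s t
        have e2 := Aint_sub ha' s t
        simp only [hX, hX']
        linarith
      rw [hXeq]
      calc |∫ x in s..t, (a' x - a x)| ≤ ∫ x in s..t, |a' x - a x| :=
            intervalIntegral.abs_integral_le_integral_abs hst
        _ ≤ ∫ _x in s..t, η := by
            apply intervalIntegral.integral_mono_on hst
              ((ha'.sub ha).abs.intervalIntegrable s t) intervalIntegrable_const
            intro x _
            rw [Pi.sub_apply, abs_sub_comm]
            exact hη x
        _ = η * (t - s) := by simp [mul_comm]
    have decomp : Real.exp X * b s - Real.exp X' * b' s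
        = Real.exp X' * (b s - b' s) + (Real.exp X - Real.exp X') * b s := by ring
    rw [Real.norm_eq_abs, decomp]
    calc |Real.exp X' * (b s - b' s) + (Real.exp X - Real.exp X') * b s|
        ≤ |Real.exp X' * (b s - b' s)| + |(Real.exp X - Real.exp X') * b s| := abs_add_le _ _
      _ = Real.exp X' * |b s - b' s| + |Real.exp X - Real.exp X'| * |b s| := by
          rw [abs_mul, abs_mul, abs_of_pos (Real.exp_pos _)]
      _ ≤ Real.exp (-(α * (t - s))) * η' +
          (Real.exp (-(α * (t - s))) * |X - X'|) * M := by
          apply add_le_add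
          · exact mul_le_mul (Real.exp_le_exp.2 hX'le) (hη' s) (abs_nonneg _) (Real.exp_pos _).le
          · exact mul_le_mul (abs_exp_sub_exp_le hXle hX'le) (hbM s) (abs_nonneg _)
              (by positivity)
      _ ≤ Real.exp (-(α * (t - s))) * η' +
          (Real.exp (-(α * (t - s))) * (η * (t - s))) * M := by
          apply add_le_add le_rfl
          apply mul_le_mul_of_nonneg_right _ hM0
          exact mul_le_mul_of_nonneg_left hXX' (Real.exp_pos _).le
      _ = η' * Real.exp (-(α * (t - s))) + M * η * ((t - s) * Real.exp (-(α * (t - s)))) := by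
          ring
  have hval : (∫ s in Iic t,
      (η' * Real.exp (-(α * (t - s))) + M * η * ((t - s) * Real.exp (-(α * (t - s))))))
      = η' / α + M * η / α ^ 2 := by
    rw [integral_add (hg1.const_mul η') (hg2.const_mul (M * η)), MeasureTheory.integral_const_mul,
      MeasureTheory.integral_const_mul]
    rw [integral_Iic_comp_sub (fun x => Real.exp (-(α * x))) t,
      integral_Iic_comp_sub (fun x => x * Real.exp (-(α * x))) t,
      integral_exp_neg_mul hα, integral_mul_exp_neg_mul hα]
    ring
  rw [hval] at key
  exact key



variable {a b : ℝ → ℝ} {α M c : ℝ}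

lemma pos_iInf_bddBelow {u : ℝ → ℝ} (h : 0 < ⨅ t, u t) : BddBelow (Set.range u) := by
  by_contra hb
  rw [Real.iInf_of_not_bddBelow hb] at h
  exact lt_irrefl _ h

lemma linear_unique (ha : Continuous a) (hα : 0 < α) (hαa : ∀ t, α ≤ a t)
    {v w : ℝ → ℝ} (hv : ∀ t, HasDerivAt v (b t - a t * v t) t)
    (hw : ∀ t, HasDerivAt w (b t - a t * w t) t)
    {K : ℝ} (hbound : ∀ t, |v t - w t| ≤ K) : v = w := by
  set g : ℝ → ℝ := fun t => (v t - w t) * Real.exp (Aint a t) with hgdef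
  have hg : ∀ t, HasDerivAt g 0 t := by
    intro t
    have h1 : HasDerivAt (fun t => (v t - w t) * Real.exp (Aint a t)) _ t :=
      ((hv t).sub (hw t)).mul (Aint_hasDerivAt ha t).exp
    convert h1 using 1
    simp only [Pi.sub_apply]
    ring
  have hconst : ∀ t, g t = g 0 :=
    fun t => is_const_of_deriv_eq_zero (fun x => (hg x).differentiableAt)
      (fun x => (hg x).deriv) t 0
  have hA0 : Aint a 0 = 0 := by simp [Aint]
  have hg0 : g 0 = v 0 - w 0 := by simp [hgdef, hA0]
  have key : ∀ t, v t - w t = g 0 * Real.exp (-(Aint a t)) := by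
    intro t
    have h : (v t - w t) * Real.exp (Aint a t) = g 0 := hconst t
    have hexp := Real.exp_pos (Aint a t)
    rw [Real.exp_neg]
    field_simp
    linarith [h]
  have hzero : g 0 = 0 := by
    by_contra hg0ne
    have hK0 : 0 ≤ K := le_trans (abs_nonneg _) (hbound 0)
    have habs : 0 < |g 0| := abs_pos.2 hg0ne
    set T : ℝ := -(max 0 (Real.log ((K + 1) / |g 0|)) / α) with hT
    have hT0 : T ≤ 0 := by
      rw [hT]
      have : 0 ≤ max 0 (Real.log ((K + 1) / |g 0|)) / α :=
        div_nonneg (le_max_left _ _) hα.le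
      linarith
    have hAT : α * (0 - T) ≤ Aint a 0 - Aint a T := Aint_sub_ge ha hαa hT0
    have hAT' : -(Aint a T) ≥ α * (-T) := by rw [hA0] at hAT; linarith
    have hexpT : Real.exp (-(Aint a T)) ≥ (K + 1) / |g 0| := by
      calc Real.exp (-(Aint a T)) ≥ Real.exp (α * (-T)) := Real.exp_le_exp.2 hAT'
        _ ≥ Real.exp (Real.log ((K + 1) / |g 0|)) := by
            apply Real.exp_le_exp.2
            rw [hT]
            rw [neg_neg, mul_div_cancel₀ _ hα.ne']
            exact le_max_right _ _
        _ = (K + 1) / |g 0| := Real.exp_log (by positivity)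
    have h1 : |v T - w T| = |g 0| * Real.exp (-(Aint a T)) := by
      rw [key T, abs_mul, abs_of_pos (Real.exp_pos _)]
    have h2 : |g 0| * Real.exp (-(Aint a T)) ≥ |g 0| * ((K + 1) / |g 0|) :=
      mul_le_mul_of_nonneg_left hexpT habs.le
    rw [mul_div_cancel₀ _ habs.ne'] at h2
    have := hbound T
    rw [h1] at this
    linarith
  funext t
  have := key t
  rw [hzero] at this
  simp at this
  linarith

lemma inv_hasDerivAt_linear {u : ℝ → ℝ} (hc : 0 < c) (hcu : ∀ t, c ≤ u t)
    (hu : ∀ t, HasDerivAt u (u t * (a t - b t * u t)) t) (t : ℝ) :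
    HasDerivAt (fun t => (u t)⁻¹) (b t - a t * (u t)⁻¹) t := by
  have hne : u t ≠ 0 := (lt_of_lt_of_le hc (hcu t)).ne'
  have h : HasDerivAt (fun t => (u t)⁻¹) _ t := (hu t).inv hne
  convert h using 1
  field_simp
  ring

lemma logistic_sol_eq (ha : Continuous a) (hα : 0 < α) (hαa : ∀ t, α ≤ a t)
    {u₁ u₂ : ℝ → ℝ}
    (hu₁ : ∀ t, HasDerivAt u₁ (u₁ t * (a t - b t * u₁ t)) t)
    (hu₂ : ∀ t, HasDerivAt u₂ (u₂ t * (a t - b t * u₂ t)) t)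
    (hI₁ : 0 < ⨅ t, u₁ t) (hI₂ : 0 < ⨅ t, u₂ t) : u₁ = u₂ := by
  have hbb₁ := pos_iInf_bddBelow hI₁
  have hbb₂ := pos_iInf_bddBelow hI₂
  have hc₁ : ∀ t, (⨅ s, u₁ s) ≤ u₁ t := fun t => ciInf_le hbb₁ t
  have hc₂ : ∀ t, (⨅ s, u₂ s) ≤ u₂ t := fun t => ciInf_le hbb₂ t
  set c₁ := ⨅ s, u₁ s
  set c₂ := ⨅ s, u₂ s
  have hv₁ := inv_hasDerivAt_linear (b := b) hI₁ hc₁ hu₁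
  have hv₂ := inv_hasDerivAt_linear (b := b) hI₂ hc₂ hu₂
  have hbound : ∀ t, |(u₁ t)⁻¹ - (u₂ t)⁻¹| ≤ c₁⁻¹ + c₂⁻¹ := by
    intro t
    have h₁ : 0 < u₁ t := lt_of_lt_of_le hI₁ (hc₁ t)
    have h₂ : 0 < u₂ t := lt_of_lt_of_le hI₂ (hc₂ t)
    have e₁ : (u₁ t)⁻¹ ≤ c₁⁻¹ := by
      apply inv_anti₀ hI₁ (hc₁ t)
    have e₂ : (u₂ t)⁻¹ ≤ c₂⁻¹ := by
      apply inv_anti₀ hI₂ (hc₂ t)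
    rw [abs_sub_le_iff]
    constructor
    · have : 0 < (u₂ t)⁻¹ := by positivity
      have : 0 ≤ c₂⁻¹ := by positivity
      nlinarith [inv_pos.2 h₂]
    · have : 0 ≤ c₁⁻¹ := by positivity
      nlinarith [inv_pos.2 h₁]
  have heq := linear_unique ha hα hαa hv₁ hv₂ hbound
  funext t
  have h₁ : 0 < u₁ t := lt_of_lt_of_le hI₁ (hc₁ t)
  have h₂ : 0 < u₂ t := lt_of_lt_of_le hI₂ (hc₂ t)
  have := congrFun heq t
  field_simp at this
  linarith [this]

variable {f f₁ f₂ f₃ : ℝ → ℝ}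

lemma bohr_uc (hf : BohrAlmostPeriodic f) :
    ∀ ε > 0, ∃ δ > 0, ∀ t h : ℝ, |h| ≤ δ → |f (t + h) - f t| < ε := by
  obtain ⟨hc, hap⟩ := hf
  intro ε hε
  obtain ⟨l, hl, hper⟩ := hap (ε / 3) (by linarith)
  have huc : UniformContinuousOn f (Icc (-1) (l + 1)) :=
    (isCompact_Icc).uniformContinuousOn_of_continuous (hc.continuousOn)
  rw [Metric.uniformContinuousOn_iff] at huc
  obtain ⟨δ, hδ, hucd⟩ := huc (ε / 3) (by linarith)
  refine ⟨min (δ / 2) 1, by positivity, fun t h hh => ?_⟩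
  obtain ⟨τ, hτmem, hτ⟩ := hper (-t)
  have hτ1 : 0 ≤ t + τ := by have := hτmem.1; linarith
  have hτ2 : t + τ ≤ l := by have := hτmem.2; linarith
  have hh1 : |h| ≤ 1 := le_trans hh (min_le_right _ _)
  have hh2 : |h| ≤ δ / 2 := le_trans hh (min_le_left _ _)
  have habs1 := abs_le.1 hh1
  have hmem1 : t + τ ∈ Icc (-1 : ℝ) (l + 1) := ⟨by linarith, by linarith⟩
  have hmem2 : t + τ + h ∈ Icc (-1 : ℝ) (l + 1) := ⟨by linarith, by linarith⟩
  have hdist : dist (t + τ + h) (t + τ) < δ := by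
    rw [Real.dist_eq]
    have : t + τ + h - (t + τ) = h := by ring
    rw [this]
    linarith
  have hmid : |f (t + τ + h) - f (t + τ)| < ε / 3 := by
    have := hucd _ hmem2 _ hmem1 hdist
    rwa [Real.dist_eq] at this
  have h1 : |f (t + h + τ) - f (t + h)| < ε / 3 := hτ (t + h)
  have h2 : |f (t + τ) - f t| < ε / 3 := hτ t
  have heq : t + h + τ = t + τ + h := by ring
  rw [heq] at h1
  calc |f (t + h) - f t|
      = |(f (t + h) - f (t + τ + h)) + (f (t + τ + h) - f (t + τ)) + (f (t + τ) - f t)| := by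
        congr 1; ring
    _ ≤ |f (t + h) - f (t + τ + h)| + |f (t + τ + h) - f (t + τ)| + |f (t + τ) - f t| :=
        abs_add_three _ _ _
    _ < ε / 3 + ε / 3 + ε / 3 := by
        apply add_lt_add (add_lt_add _ hmid) h2
        rw [abs_sub_comm]
        exact h1
    _ = ε := by ring

lemma bohr_net (hf : BohrAlmostPeriodic f) :
    ∀ ε > 0, ∃ R : Finset ℝ, ∀ s : ℝ, ∃ r ∈ R, ∀ t, |f (t + s) - f (t + r)| ≤ ε := by
  intro ε hε
  obtain ⟨δ, hδ, huc⟩ := bohr_uc hf (ε / 2) (by linarith)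
  obtain ⟨l, hl, hper⟩ := hf.2 (ε / 2) (by linarith)
  set n : ℕ := ⌊l / δ⌋₊ + 1 with hn
  refine ⟨Finset.image (fun j : ℕ => (j : ℝ) * δ) (Finset.range n), fun s => ?_⟩
  obtain ⟨τ, hτmem, hτ⟩ := hper (-s)
  set ρ := s + τ with hρ
  have hρ0 : 0 ≤ ρ := by have := hτmem.1; simp only [hρ]; linarith
  have hρl : ρ ≤ l := by have := hτmem.2; simp only [hρ]; linarith
  set j : ℕ := ⌊ρ / δ⌋₊ with hj
  have hjn : j < n := by
    rw [hn, Nat.lt_add_one_iff]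
    exact Nat.floor_le_floor (by gcongr)
  have hjd : (j : ℝ) * δ ≤ ρ := by
    have h1 : (j : ℝ) ≤ ρ / δ := Nat.floor_le (by positivity)
    rw [← le_div_iff₀ hδ]
    exact h1
  have hjd2 : ρ - (j : ℝ) * δ ≤ δ := by
    have h1 : ρ / δ < (j : ℝ) + 1 := Nat.lt_floor_add_one _
    have h2 : ρ < ((j : ℝ) + 1) * δ := by
      rw [← div_lt_iff₀ hδ] at *
      linarith
    nlinarith
  refine ⟨(j : ℝ) * δ, Finset.mem_image.2 ⟨j, Finset.mem_range.2 hjn, rfl⟩, fun t => ?_⟩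
  have h1 : |f (t + s + τ) - f (t + s)| < ε / 2 := hτ (t + s)
  have h2 : |f ((t + (j : ℝ) * δ) + (ρ - (j : ℝ) * δ)) - f (t + (j : ℝ) * δ)| < ε / 2 :=
    huc _ _ (by rw [abs_of_nonneg (by linarith)]; exact hjd2)
  have e1 : t + s + τ = t + ρ := by rw [hρ]; ring
  have e2 : (t + (j : ℝ) * δ) + (ρ - (j : ℝ) * δ) = t + ρ := by ring
  rw [e1] at h1
  rw [e2] at h2
  calc |f (t + s) - f (t + (j : ℝ) * δ)|
      = |(f (t + s) - f (t + ρ)) + (f (t + ρ) - f (t + (j : ℝ) * δ))| := by congr 1; ring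
    _ ≤ |f (t + s) - f (t + ρ)| + |f (t + ρ) - f (t + (j : ℝ) * δ)| := abs_add_le _ _
    _ ≤ ε / 2 + ε / 2 := by
        apply add_le_add _ h2.le
        rw [abs_sub_comm]
        exact h1.le
    _ = ε := by ring

lemma bohr_common (hf₁ : BohrAlmostPeriodic f₁) (hf₂ : BohrAlmostPeriodic f₂)
    (hf₃ : BohrAlmostPeriodic f₃) :
    ∀ ε > 0, ∃ l > 0, ∀ s : ℝ, ∃ τ ∈ Set.Icc s (s + l),
      (∀ t, |f₁ (t + τ) - f₁ t| < ε) ∧ (∀ t, |f₂ (t + τ) - f₂ t| < ε) ∧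
      (∀ t, |f₃ (t + τ) - f₃ t| < ε) := by
  intro ε hε
  obtain ⟨R₁, hR₁⟩ := bohr_net hf₁ (ε / 5) (by linarith)
  obtain ⟨R₂, hR₂⟩ := bohr_net hf₂ (ε / 5) (by linarith)
  obtain ⟨R₃, hR₃⟩ := bohr_net hf₃ (ε / 5) (by linarith)
  have hP : ∀ s : ℝ, ∃ ρ : ℝ × ℝ × ℝ, ρ.1 ∈ R₁ ∧ ρ.2.1 ∈ R₂ ∧ ρ.2.2 ∈ R₃ ∧
      (∀ t, |f₁ (t + s) - f₁ (t + ρ.1)| ≤ ε / 5) ∧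
      (∀ t, |f₂ (t + s) - f₂ (t + ρ.2.1)| ≤ ε / 5) ∧
      (∀ t, |f₃ (t + s) - f₃ (t + ρ.2.2)| ≤ ε / 5) := by
    intro s
    obtain ⟨r₁, hr₁m, hr₁⟩ := hR₁ s
    obtain ⟨r₂, hr₂m, hr₂⟩ := hR₂ s
    obtain ⟨r₃, hr₃m, hr₃⟩ := hR₃ s
    exact ⟨⟨r₁, r₂, r₃⟩, hr₁m, hr₂m, hr₃m, hr₁, hr₂, hr₃⟩
  choose r hrm₁ hrm₂ hrm₃ hr₁ hr₂ hr₃ using hP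
  classical
  set rep : ℝ × ℝ × ℝ → ℝ := fun ρ => if h : ∃ s, r s = ρ then h.choose else 0 with hrep
  set F : Finset (ℝ × ℝ × ℝ) := R₁ ×ˢ R₂ ×ˢ R₃ with hF
  set Mv : ℝ := ∑ ρ ∈ F, |rep ρ| with hM
  have hM0 : 0 ≤ Mv := Finset.sum_nonneg fun ρ _ => abs_nonneg _
  have hMle : ∀ ρ ∈ F, |rep ρ| ≤ Mv :=
    fun ρ hρ => Finset.single_le_sum (f := fun ρ => |rep ρ|) (fun ρ _ => abs_nonneg _) hρ
  refine ⟨2 * Mv + 2, by linarith, fun s => ?_⟩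
  set σ := s + Mv + 1 with hσ
  have hQ : ∃ s', r s' = r σ := ⟨σ, rfl⟩
  set sρ := rep (r σ) with hsρ
  have hsρ_eq : r sρ = r σ := by
    rw [hsρ, hrep]
    simp only [dif_pos hQ]
    exact hQ.choose_spec
  have hmemF : r σ ∈ F := by
    rw [hF]
    exact Finset.mem_product.2 ⟨hrm₁ σ, Finset.mem_product.2 ⟨hrm₂ σ, hrm₃ σ⟩⟩
  have hsρM : |sρ| ≤ Mv := hMle _ hmemF
  have habs := abs_le.1 hsρM
  refine ⟨σ - sρ, ⟨by rw [hσ]; linarith, by rw [hσ]; linarith⟩, ?_, ?_, ?_⟩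
  · intro t
    have h1 := hr₁ σ (t - sρ)
    have h2 := hr₁ sρ (t - sρ)
    rw [hsρ_eq] at h2
    have e1 : t - sρ + σ = t + (σ - sρ) := by ring
    have e2 : t - sρ + sρ = t := by ring
    rw [e1] at h1
    rw [e2] at h2
    calc |f₁ (t + (σ - sρ)) - f₁ t|
        = |(f₁ (t + (σ - sρ)) - f₁ (t - sρ + (r σ).1)) - (f₁ t - f₁ (t - sρ + (r σ).1))| := by
          congr 1; ring
      _ ≤ |f₁ (t + (σ - sρ)) - f₁ (t - sρ + (r σ).1)| + |f₁ t - f₁ (t - sρ + (r σ).1)| :=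
          abs_sub _ _
      _ ≤ ε / 5 + ε / 5 := add_le_add h1 h2
      _ < ε := by linarith
  · intro t
    have h1 := hr₂ σ (t - sρ)
    have h2 := hr₂ sρ (t - sρ)
    rw [hsρ_eq] at h2
    have e1 : t - sρ + σ = t + (σ - sρ) := by ring
    have e2 : t - sρ + sρ = t := by ring
    rw [e1] at h1
    rw [e2] at h2
    calc |f₂ (t + (σ - sρ)) - f₂ t|
        = |(f₂ (t + (σ - sρ)) - f₂ (t - sρ + (r σ).2.1)) - (f₂ t - f₂ (t - sρ + (r σ).2.1))| := by
          congr 1; ring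
      _ ≤ |f₂ (t + (σ - sρ)) - f₂ (t - sρ + (r σ).2.1)| + |f₂ t - f₂ (t - sρ + (r σ).2.1)| :=
          abs_sub _ _
      _ ≤ ε / 5 + ε / 5 := add_le_add h1 h2
      _ < ε := by linarith
  · intro t
    have h1 := hr₃ σ (t - sρ)
    have h2 := hr₃ sρ (t - sρ)
    rw [hsρ_eq] at h2
    have e1 : t - sρ + σ = t + (σ - sρ) := by ring
    have e2 : t - sρ + sρ = t := by ring
    rw [e1] at h1
    rw [e2] at h2
    calc |f₃ (t + (σ - sρ)) - f₃ t|
        = |(f₃ (t + (σ - sρ)) - f₃ (t - sρ + (r σ).2.2)) - (f₃ t - f₃ (t - sρ + (r σ).2.2))| := by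
          congr 1; ring
      _ ≤ |f₃ (t + (σ - sρ)) - f₃ (t - sρ + (r σ).2.2)| + |f₃ t - f₃ (t - sρ + (r σ).2.2)| :=
          abs_sub _ _
      _ ≤ ε / 5 + ε / 5 := add_le_add h1 h2
      _ < ε := by linarith


lemma inv_diff_le {x y K D : ℝ} (hx : 0 < x) (hy : 0 < y) (hxK : x⁻¹ ≤ K) (hyK : y⁻¹ ≤ K)
    (hD : |y - x| ≤ D) : |x⁻¹ - y⁻¹| ≤ D * K ^ 2 := by
  have hxy : x⁻¹ - y⁻¹ = (y - x) * (x⁻¹ * y⁻¹) := by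
    field_simp
  rw [hxy, abs_mul, abs_of_pos (mul_pos (inv_pos.2 hx) (inv_pos.2 hy))]
  have hK0 : 0 < K := lt_of_lt_of_le (inv_pos.2 hx) hxK
  have h1 : x⁻¹ * y⁻¹ ≤ K ^ 2 := by nlinarith [inv_pos.2 hx, inv_pos.2 hy]
  have hD0 : 0 ≤ D := le_trans (abs_nonneg _) hD
  calc |y - x| * (x⁻¹ * y⁻¹) ≤ D * K ^ 2 :=
    mul_le_mul hD h1 (by positivity) hD0
/-- for `κ > 0` and continuous bounded `a₀, a₁, a₂` with `inf a₀ > 0` and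
`inf_t {a₁(t) − κ(a₂(t))₋} > 0`, the ODE `u' = u(a₀(t) − (a₁(t) + κ a₂(t))u)` has exactly
one entire solution `u*` that is bounded and has positive infimum; moreover `u*` is
`T`-periodic whenever `a₀, a₁, a₂` all are, and `u*` is almost periodic whenever `a₀, a₁, a₂`
all are. -/
theorem homogeneous_logistic_unique_entire_solution_periodic_almost_periodic
    (κ : ℝ) (hκ : 0 < κ)
    (a₀ a₁ a₂ : ℝ → ℝ)
    (h₀c : Continuous a₀) (h₁c : Continuous a₁) (h₂c : Continuous a₂)
    (h₀B : BddAbove (Set.range a₀)) (h₀b : BddBelow (Set.range a₀))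
    (h₁B : BddAbove (Set.range a₁)) (h₁b : BddBelow (Set.range a₁))
    (h₂B : BddAbove (Set.range a₂)) (h₂b : BddBelow (Set.range a₂))
    (h₀pos : 0 < ⨅ t, a₀ t)
    (hcond : 0 < ⨅ t, (a₁ t - κ * max (-(a₂ t)) 0)) :
    (∃! u : ℝ → ℝ,
      (∀ t, HasDerivAt u (u t * (a₀ t - (a₁ t + κ * a₂ t) * u t)) t) ∧
      BddAbove (Set.range u) ∧ 0 < ⨅ t, u t) ∧
    (∀ u : ℝ → ℝ,
      ((∀ t, HasDerivAt u (u t * (a₀ t - (a₁ t + κ * a₂ t) * u t)) t) ∧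
        BddAbove (Set.range u) ∧ 0 < ⨅ t, u t) →
      (∀ T : ℝ, 0 < T →
        ((∀ t, a₀ (t + T) = a₀ t) ∧ (∀ t, a₁ (t + T) = a₁ t) ∧ (∀ t, a₂ (t + T) = a₂ t)) →
        ∀ t, u (t + T) = u t) ∧
      ((BohrAlmostPeriodic a₀ ∧ BohrAlmostPeriodic a₁ ∧ BohrAlmostPeriodic a₂) →
        BohrAlmostPeriodic u)) := by
  -- basic constants
  set α : ℝ := ⨅ t, a₀ t with hαdef
  have hα : 0 < α := h₀pos
  have hαa : ∀ t, α ≤ a₀ t := fun t => ciInf_le h₀b t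
  obtain ⟨β, hβmem⟩ := h₀B
  have haβ : ∀ t, a₀ t ≤ β := fun t => hβmem ⟨t, rfl⟩
  have hβ : 0 < β := lt_of_lt_of_le hα ((hαa 0).trans (haβ 0))
  set b : ℝ → ℝ := fun t => a₁ t + κ * a₂ t with hbdef
  have hb : Continuous b := h₁c.add (continuous_const.mul h₂c)
  set m : ℝ := ⨅ t, (a₁ t - κ * max (-(a₂ t)) 0) with hmdef
  have hm : 0 < m := hcond
  obtain ⟨c₁, hc₁'⟩ := h₁b
  have hc₁ : ∀ t, c₁ ≤ a₁ t := fun t => hc₁' ⟨t, rfl⟩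
  obtain ⟨c₂, hc₂'⟩ := h₂b
  have hc₂ : ∀ t, c₂ ≤ a₂ t := fun t => hc₂' ⟨t, rfl⟩
  have hbdd : BddBelow (Set.range fun t => a₁ t - κ * max (-(a₂ t)) 0) := by
    refine ⟨c₁ - κ * max (-c₂) 0, ?_⟩
    rintro x ⟨t, rfl⟩
    show c₁ - κ * max (-c₂) 0 ≤ a₁ t - κ * max (-(a₂ t)) 0
    have h1 : max (-(a₂ t)) 0 ≤ max (-c₂) 0 :=
      max_le_max (neg_le_neg (hc₂ t)) le_rfl
    have := hc₁ t
    nlinarith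
  have hmb : ∀ t, m ≤ b t := by
    intro t
    have h1 : m ≤ a₁ t - κ * max (-(a₂ t)) 0 := ciInf_le hbdd t
    have h2 : -(max (-(a₂ t)) 0) ≤ a₂ t := by
      rcases le_total (-(a₂ t)) 0 with h | h
      · rw [max_eq_right h]; linarith
      · rw [max_eq_left h]; linarith
    show m ≤ a₁ t + κ * a₂ t
    nlinarith
  obtain ⟨C₁, hC₁'⟩ := h₁B
  have hC₁ : ∀ t, a₁ t ≤ C₁ := fun t => hC₁' ⟨t, rfl⟩
  obtain ⟨C₂, hC₂'⟩ := h₂B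
  have hC₂ : ∀ t, a₂ t ≤ C₂ := fun t => hC₂' ⟨t, rfl⟩
  set M : ℝ := max (C₁ + κ * C₂) 1 with hMdef
  have hM : 0 < M := lt_of_lt_of_le one_pos (le_max_right _ _)
  have hbM : ∀ t, |b t| ≤ M := by
    intro t
    have h1 : b t ≤ C₁ + κ * C₂ := by
      have := hC₁ t
      have h2 := hC₂ t
      simp only [hbdef]
      nlinarith
    have h2 : m ≤ b t := hmb t
    rw [abs_le]
    constructor
    · linarith [le_max_right (C₁ + κ * C₂) 1]
    · exact le_trans h1 (le_max_left _ _)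
  -- the canonical solution
  set V : ℝ → ℝ := vsol a₀ b with hVdef
  have hVd : ∀ t, HasDerivAt V (b t - a₀ t * V t) t :=
    fun t => vsol_hasDerivAt h₀c hα hαa hb hbM t
  have hVub : ∀ t, V t ≤ M / α := fun t => vsol_le h₀c hα hαa hb hbM t
  have hVlb : ∀ t, m / β ≤ V t := fun t =>
    vsol_ge h₀c hβ haβ hb hm.le hmb t (vsol_integrableOn h₀c hα hαa hb hbM t)
  have hV0 : ∀ t, 0 < V t := fun t => lt_of_lt_of_le (by positivity) (hVlb t)
  set ustar : ℝ → ℝ := fun t => (V t)⁻¹ with hustar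
  have hud : ∀ t, HasDerivAt ustar (ustar t * (a₀ t - (a₁ t + κ * a₂ t) * ustar t)) t := by
    intro t
    have h : HasDerivAt (fun t => (V t)⁻¹) _ t := (hVd t).inv (hV0 t).ne'
    have hVne := (hV0 t).ne'
    convert h using 1
    show (V t)⁻¹ * (a₀ t - b t * (V t)⁻¹) = -(b t - a₀ t * V t) / V t ^ 2
    rw [eq_div_iff (pow_ne_zero 2 hVne)]
    calc (V t)⁻¹ * (a₀ t - b t * (V t)⁻¹) * V t ^ 2
        = a₀ t * (V t * ((V t)⁻¹ * V t)) - b t * (((V t)⁻¹ * V t) * ((V t)⁻¹ * V t)) := by ring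
      _ = -(b t - a₀ t * V t) := by rw [inv_mul_cancel₀ hVne]; ring
  have hBu : BddAbove (Set.range ustar) := by
    refine ⟨β / m, ?_⟩
    rintro x ⟨t, rfl⟩
    show (V t)⁻¹ ≤ β / m
    rw [← inv_div m β]
    exact inv_anti₀ (by positivity) (hVlb t)
  have hIu : 0 < ⨅ t, ustar t := by
    have hlow : ∀ t, α / M ≤ ustar t := by
      intro t
      show α / M ≤ (V t)⁻¹
      rw [← inv_div M α]
      exact inv_anti₀ (hV0 t) (hVub t)
    exact lt_of_lt_of_le (by positivity) (le_ciInf hlow)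
  have hP : (∀ t, HasDerivAt ustar (ustar t * (a₀ t - (a₁ t + κ * a₂ t) * ustar t)) t) ∧
      BddAbove (Set.range ustar) ∧ 0 < ⨅ t, ustar t := ⟨hud, hBu, hIu⟩
  have huniq : ∀ y : ℝ → ℝ,
      ((∀ t, HasDerivAt y (y t * (a₀ t - (a₁ t + κ * a₂ t) * y t)) t) ∧
        BddAbove (Set.range y) ∧ 0 < ⨅ t, y t) → y = ustar := by
    intro y hy
    exact logistic_sol_eq (b := b) h₀c hα hαa hy.1 hud hy.2.2 hIu
  constructor
  · exact ⟨ustar, hP, huniq⟩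
  · intro u hu
    have huu : u = ustar := huniq u hu
    constructor
    · rintro T hT ⟨hp₀, hp₁, hp₂⟩ t
      set w : ℝ → ℝ := fun t => u (t + T) with hwdef
      have hwP : (∀ t, HasDerivAt w (w t * (a₀ t - (a₁ t + κ * a₂ t) * w t)) t) ∧
          BddAbove (Set.range w) ∧ 0 < ⨅ t, w t := by
        refine ⟨?_, ?_, ?_⟩
        · intro t
          have h := (hu.1 (t + T)).comp_add_const t T
          rw [hp₀ t, hp₁ t, hp₂ t] at h
          exact h
        · apply hu.2.1.mono
          rintro x ⟨t, rfl⟩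
          exact ⟨t + T, rfl⟩
        · have hrange : Set.range w = Set.range u := by
            ext x
            constructor
            · rintro ⟨t, rfl⟩; exact ⟨t + T, rfl⟩
            · rintro ⟨t, rfl⟩; exact ⟨t - T, by simp [hwdef]⟩
          have : (⨅ t, w t) = ⨅ t, u t := by
            rw [← sInf_range, ← sInf_range, hrange]
          rw [this]
          exact hu.2.2
      have hww : w = ustar := huniq w hwP
      calc u (t + T) = w t := rfl
        _ = ustar t := congrFun hww t
        _ = u t := (congrFun huu t).symm
    · rintro ⟨hap₀, hap₁, hap₂⟩
      rw [huu]
      have hVc : Continuous V := continuous_iff_continuousAt.2 fun t => (hVd t).continuousAt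
      constructor
      · exact hVc.inv₀ fun t => (hV0 t).ne'
      · intro ε hε
        set C' : ℝ := ((1 + κ) / α + M / α ^ 2) * (β / m) ^ 2 + 1 with hC'def
        have hC'0 : 0 < C' := by positivity
        set η : ℝ := ε / C' with hηdef
        have hη0 : 0 < η := by positivity
        obtain ⟨l, hl, hcom⟩ := bohr_common hap₀ hap₁ hap₂ η hη0
        refine ⟨l, hl, fun s => ?_⟩
        obtain ⟨τ, hτmem, hc₀, hca₁, hca₂⟩ := hcom s
        refine ⟨τ, hτmem, fun t => ?_⟩
        have hηa : ∀ r, |a₀ r - a₀ (r + τ)| ≤ η := by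
          intro r
          rw [abs_sub_comm]
          exact (hc₀ r).le
        have hηb : ∀ r, |b r - b (r + τ)| ≤ (1 + κ) * η := by
          intro r
          have h1 := (hca₁ r).le
          have h2 := (hca₂ r).le
          simp only [hbdef]
          have : a₁ r + κ * a₂ r - (a₁ (r + τ) + κ * a₂ (r + τ))
              = -((a₁ (r + τ) - a₁ r)) + κ * (-(a₂ (r + τ) - a₂ r)) := by ring
          rw [this]
          calc |(-(a₁ (r + τ) - a₁ r)) + κ * (-(a₂ (r + τ) - a₂ r))|
              ≤ |(-(a₁ (r + τ) - a₁ r))| + |κ * (-(a₂ (r + τ) - a₂ r))| := abs_add_le _ _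
            _ = |a₁ (r + τ) - a₁ r| + κ * |a₂ (r + τ) - a₂ r| := by
                rw [abs_neg, abs_mul, abs_neg, abs_of_pos hκ]
            _ ≤ η + κ * η := by
                apply add_le_add h1
                exact mul_le_mul_of_nonneg_left h2 hκ.le
            _ = (1 + κ) * η := by ring
        have hperturb :=
          vsol_perturb (a' := fun x => a₀ (x + τ)) (b' := fun x => b (x + τ))
            h₀c (h₀c.comp (continuous_add_right τ)) hb (hb.comp (continuous_add_right τ))
            hα hαa (fun r => hαa (r + τ)) hbM (fun r => hbM (r + τ)) hηa hηb t
        have hshift : vsol (fun x => a₀ (x + τ)) (fun x => b (x + τ)) t = V (t + τ) :=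
          vsol_shift h₀c τ t
        rw [hshift] at hperturb
        -- hperturb : |V t - V (t+τ)| ≤ (1+κ)*η/α + M*η/α^2
        have hD : |V t - V (t + τ)| ≤ ((1 + κ) / α + M / α ^ 2) * η := by
          calc |V t - V (t + τ)| ≤ (1 + κ) * η / α + M * η / α ^ 2 := hperturb
            _ = ((1 + κ) / α + M / α ^ 2) * η := by ring
        have hKbd : ∀ r, (V r)⁻¹ ≤ β / m := by
          intro r
          rw [← inv_div m β]
          exact inv_anti₀ (by positivity) (hVlb r)
        have habs : |(V (t + τ))⁻¹ - (V t)⁻¹| ≤ (((1 + κ) / α + M / α ^ 2) * η) * (β / m) ^ 2 :=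
          inv_diff_le (hV0 (t + τ)) (hV0 t) (hKbd (t + τ)) (hKbd t) hD
        show |(V (t + τ))⁻¹ - (V t)⁻¹| < ε
        have hε_eq : C' * η = ε := by
          rw [hηdef]
          field_simp
        calc |(V (t + τ))⁻¹ - (V t)⁻¹| ≤ (((1 + κ) / α + M / α ^ 2) * η) * (β / m) ^ 2 := habs
          _ = (((1 + κ) / α + M / α ^ 2) * (β / m) ^ 2) * η := by ring
          _ < C' * η := by
              apply mul_lt_mul_of_pos_right _ hη0
              rw [hC'def]
              linarith
          _ = ε := hε_eq
end

section
/- A continuous function g : ℝ × K → ℝ is almost periodic in t uniformly with respect to x ∈ K if and only if g is uniformly continuous on ℝ × K and for any two sequences {β'_n}, {γ'_n} ⊂ ℝ there exist subsequences {β_n} of {β'_n} and {γ_n} of {γ'_n} (extracted with the same indices) such that for every (t, x) ∈ ℝ × K the iterated limit lim_{n→∞} lim_{m→∞} g(t + β_n + γ_m, x) and the diagonal limit lim_{n→∞} g(t + β_n + γ_n, x) both exist and are equal. -/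
open Filter Topology Metric


/-- `g(t,x)` is almost periodic in `t` uniformly with respect to `x ∈ K`:
`g` is uniformly continuous on `ℝ × K` and, for each `x ∈ K`, `t ↦ g(t,x)` is almost
periodic. -/
def AlmostPeriodicUniformlyIn {n : ℕ} (g : ℝ → EuclideanSpace ℝ (Fin n) → ℝ)
    (K : Set (EuclideanSpace ℝ (Fin n))) : Prop :=
  UniformContinuousOn (fun p : ℝ × EuclideanSpace ℝ (Fin n) => g p.1 p.2)
      (Set.univ ×ˢ K) ∧
    ∀ x ∈ K, BohrAlmostPeriodic fun t => g t x

/-- From any sequence of shifts, extract a subsequence along which the translates of `g`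
converge uniformly on `ℝ × K`. -/
lemma seq_extract {n : ℕ} {K : Set (EuclideanSpace ℝ (Fin n))} (hK : IsCompact K)
    {g : ℝ → EuclideanSpace ℝ (Fin n) → ℝ}
    (hUC : UniformContinuousOn (fun p : ℝ × EuclideanSpace ℝ (Fin n) => g p.1 p.2)
      (Set.univ ×ˢ K))
    (hap : ∀ x ∈ K, BohrAlmostPeriodic fun t => g t x)
    (s : ℕ → ℝ) :
    ∃ φ : ℕ → ℕ, StrictMono φ ∧ ∃ G : ℝ → EuclideanSpace ℝ (Fin n) → ℝ,
      (∀ t, ∀ x ∈ K, Tendsto (fun k => g (t + s (φ k)) x) atTop (𝓝 (G t x))) ∧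
      ∀ ε > 0, ∃ N, ∀ m ≥ N, ∀ t, ∀ x ∈ K, |g (t + s (φ m)) x - G t x| ≤ ε := by
  classical
  rcases Set.eq_empty_or_nonempty K with hKe | hKne
  · refine ⟨id, strictMono_id, fun _ _ => 0, ?_, ?_⟩
    · intro t x hx; rw [hKe] at hx; exact absurd hx (Set.notMem_empty x)
    · intro ε hε
      exact ⟨0, fun m _ t x hx => by
        rw [hKe] at hx; exact absurd hx (Set.notMem_empty x)⟩
  -- uniform continuity in ε-δ form
  rw [Metric.uniformContinuousOn_iff] at hUC
  -- slice regularity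
  have hcx : ∀ x ∈ K, Continuous fun t => g t x := fun x hx => (hap x hx).1
  have hUCx : ∀ x ∈ K, ∀ ε > 0, ∃ δ > 0, ∀ t t' : ℝ, |t - t'| < δ →
      |g t x - g t' x| < ε := by
    intro x hx ε hε
    obtain ⟨δ, hδ, hδ'⟩ := hUC ε hε
    refine ⟨δ, hδ, fun t t' ht => ?_⟩
    have h2 : dist ((t, x) : ℝ × EuclideanSpace ℝ (Fin n)) (t', x) < δ := by
      rw [Prod.dist_eq, Real.dist_eq, dist_self]
      exact max_lt ht hδ
    have := hδ' (t, x) ⟨Set.mem_univ _, hx⟩ (t', x) ⟨Set.mem_univ _, hx⟩ h2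
    simpa [Real.dist_eq] using this
  -- slices are bounded
  have hbdd : ∀ x ∈ K, ∃ C : ℝ, ∀ t, |g t x| ≤ C := by
    intro x hx
    obtain ⟨l, hl, hl'⟩ := (hap x hx).2 1 one_pos
    obtain ⟨C, hC⟩ := IsCompact.exists_bound_of_continuousOn (isCompact_Icc (a := (0:ℝ)) (b := l))
      ((hcx x hx).continuousOn)
    refine ⟨C + 1, fun t => ?_⟩
    obtain ⟨τ, hτ, hτ'⟩ := hl' (-t)
    have h1 : t + τ ∈ Set.Icc (0:ℝ) l := by
      constructor
      · linarith [hτ.1]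
      · linarith [hτ.2]
    have h2 := hC (t + τ) h1
    have h3 := hτ' t
    rw [Real.norm_eq_abs] at h2
    calc |g t x| ≤ |g (t + τ) x| + |g (t + τ) x - g t x| := by
          have := abs_sub_abs_le_abs_sub (g t x) (g (t + τ) x)
          rw [abs_sub_comm (g t x) (g (t + τ) x)] at this
          linarith
      _ ≤ C + 1 := by
          have h4 : |g (t + τ) x - g t x| ≤ 1 := le_of_lt h3
          linarith
  -- countable dense subset of K
  have hKne' : Nonempty ↥K := hKne.to_subtype
  obtain ⟨D, hDc, hDd⟩ := TopologicalSpace.exists_countable_dense ↥K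
  have hDne : D.Nonempty := hDd.nonempty
  obtain ⟨d, hd⟩ := hDc.exists_eq_range hDne
  have hdr : DenseRange d := by rw [DenseRange, ← hd]; exact hDd
  -- bounded continuous translates of slices at the d i
  choose C hC using fun i : ℕ => hbdd (d i : EuclideanSpace ℝ (Fin n)) (d i).2
  have hcont : ∀ (i : ℕ) (u : ℝ), Continuous fun t : ℝ => g (t + u) (d i : EuclideanSpace ℝ (Fin n)) :=
    fun i u => (hcx _ (d i).2).comp (continuous_add_right u)
  let T : ℕ → ℝ → BoundedContinuousFunction ℝ ℝ := fun i u =>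
    BoundedContinuousFunction.ofNormedAddCommGroup
      (fun t => g (t + u) (d i : EuclideanSpace ℝ (Fin n))) (hcont i u) (C i)
      (fun t => by rw [Real.norm_eq_abs]; exact hC i (t + u))
  have hTval : ∀ (i : ℕ) (u : ℝ) (t : ℝ),
      T i u t = g (t + u) (d i : EuclideanSpace ℝ (Fin n)) := fun i u t => rfl
  -- T i is uniformly continuous in u
  have hTuc : ∀ i : ℕ, Continuous (T i) := by
    intro i
    apply UniformContinuous.continuous
    rw [Metric.uniformContinuous_iff]
    intro ε hε
    obtain ⟨δ, hδ, hδ'⟩ := hUCx (d i : EuclideanSpace ℝ (Fin n)) (d i).2 (ε / 2) (by linarith)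
    refine ⟨δ, hδ, fun {u u'} huu => ?_⟩
    have hle : dist (T i u) (T i u') ≤ ε / 2 := by
      rw [BoundedContinuousFunction.dist_le (by linarith)]
      intro t
      rw [hTval, hTval, Real.dist_eq]
      have : |(t + u) - (t + u')| < δ := by
        rw [Real.dist_eq] at huu
        convert huu using 2
        ring
      exact le_of_lt (hδ' _ _ this)
    linarith
  -- total boundedness of the translate family
  have hTB : ∀ i : ℕ, TotallyBounded (Set.range (T i)) := by
    intro i
    rw [Metric.totallyBounded_iff]
    intro ε hε
    obtain ⟨l, hl, hl'⟩ := (hap _ (d i).2).2 (ε / 4) (by linarith)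
    have hBc : IsCompact (T i '' Set.Icc 0 l) := (isCompact_Icc).image (hTuc i)
    obtain ⟨J, hJfin, hJ⟩ := Metric.totallyBounded_iff.1 hBc.totallyBounded (ε / 2) (by linarith)
    refine ⟨J, hJfin, fun y hy => ?_⟩
    obtain ⟨u, rfl⟩ := hy
    obtain ⟨τ, hτ, hτ'⟩ := hl' (-u)
    have hmem : u + τ ∈ Set.Icc (0:ℝ) l := ⟨by linarith [hτ.1], by linarith [hτ.2]⟩
    have hdist : dist (T i u) (T i (u + τ)) ≤ ε / 4 := by
      rw [BoundedContinuousFunction.dist_le (by linarith)]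
      intro t
      rw [hTval, hTval, Real.dist_eq]
      have := hτ' (t + u)
      have e : t + (u + τ) = t + u + τ := by ring
      rw [e, abs_sub_comm]
      exact le_of_lt this
    have hmemB : T i (u + τ) ∈ T i '' Set.Icc 0 l := ⟨u + τ, hmem, rfl⟩
    obtain ⟨z, hz⟩ := Set.mem_iUnion₂.1 (hJ hmemB)
    obtain ⟨hzJ, hzb⟩ := hz
    refine Set.mem_iUnion₂.2 ⟨z, hzJ, ?_⟩
    rw [Metric.mem_ball] at hzb ⊢
    calc dist (T i u) z ≤ dist (T i u) (T i (u + τ)) + dist (T i (u + τ)) z := dist_triangle _ _ _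
      _ < ε := by linarith
  have hcomp : ∀ i : ℕ, IsCompact (closure (Set.range (T i))) := fun i =>
    TotallyBounded.isCompact_of_isClosed (hTB i).closure isClosed_closure
  -- product diagonal extraction
  have hQ : IsCompact (Set.pi Set.univ fun i : ℕ => closure (Set.range (T i))) :=
    isCompact_univ_pi hcomp
  have hseq : IsSeqCompact (Set.pi Set.univ fun i : ℕ => closure (Set.range (T i))) :=
    hQ.isSeqCompact
  have hmemQ : ∀ k : ℕ, (fun i => T i (s k)) ∈
      Set.pi Set.univ fun i : ℕ => closure (Set.range (T i)) := by
    intro k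
    rw [Set.mem_univ_pi]
    exact fun i => subset_closure ⟨s k, rfl⟩
  obtain ⟨Flim, -, φ, hφ, hconv⟩ := hseq hmemQ
  have hconv_i : ∀ i : ℕ, Tendsto (fun k => T i (s (φ k))) atTop (𝓝 (Flim i)) := by
    intro i
    have := tendsto_pi_nhds.1 hconv i
    exact this
  -- uniform Cauchy property on all of K
  have key : ∀ ε > 0, ∃ N, ∀ k ≥ N, ∀ k' ≥ N, ∀ t, ∀ x ∈ K,
      |g (t + s (φ k)) x - g (t + s (φ k')) x| ≤ ε := by
    intro ε hε
    obtain ⟨δ, hδ, hδ'⟩ := hUC (ε / 3) (by linarith)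
    have hcov : K ⊆ ⋃ i : ℕ, Metric.ball ((d i : EuclideanSpace ℝ (Fin n))) δ := by
      intro x hx
      have : (⟨x, hx⟩ : ↥K) ∈ closure (Set.range d) := hdr _
      obtain ⟨y, hy, hyd⟩ := Metric.mem_closure_iff.1 this δ hδ
      obtain ⟨i, rfl⟩ := hy
      refine Set.mem_iUnion.2 ⟨i, ?_⟩
      rw [Metric.mem_ball]
      rw [Subtype.dist_eq] at hyd
      exact hyd
    obtain ⟨I, hI⟩ := hK.elim_finite_subcover
      (fun i : ℕ => Metric.ball ((d i : EuclideanSpace ℝ (Fin n))) δ)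
      (fun i => Metric.isOpen_ball) hcov
    have hNi : ∀ i : ℕ, ∃ N, ∀ k ≥ N, ∀ k' ≥ N,
        dist (T i (s (φ k))) (T i (s (φ k'))) < ε / 3 := by
      intro i
      have hc := (hconv_i i).cauchySeq
      rw [Metric.cauchySeq_iff] at hc
      obtain ⟨N, hN⟩ := hc (ε / 3) (by linarith)
      exact ⟨N, fun k hk k' hk' => hN k hk k' hk'⟩
    choose Nf hNf using hNi
    refine ⟨I.sup Nf, fun k hk k' hk' t x hx => ?_⟩
    obtain ⟨i, hiI, hxi⟩ : ∃ i ∈ I, x ∈ Metric.ball ((d i : EuclideanSpace ℝ (Fin n))) δ := by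
      have := hI hx
      simpa using this
    have hxd : dist x ((d i : EuclideanSpace ℝ (Fin n))) < δ := Metric.mem_ball.1 hxi
    have hpair : ∀ u : ℝ, |g u x - g u (d i : EuclideanSpace ℝ (Fin n))| < ε / 3 := by
      intro u
      have h2 : dist ((u, x) : ℝ × EuclideanSpace ℝ (Fin n)) (u, (d i : EuclideanSpace ℝ (Fin n))) < δ := by
        rw [Prod.dist_eq, dist_self]
        exact max_lt hδ hxd
      have := hδ' (u, x) ⟨Set.mem_univ _, hx⟩ (u, (d i : EuclideanSpace ℝ (Fin n)))
        ⟨Set.mem_univ _, (d i).2⟩ h2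
      simpa [Real.dist_eq] using this
    have hki : k ≥ Nf i := le_trans (Finset.le_sup hiI) hk
    have hki' : k' ≥ Nf i := le_trans (Finset.le_sup hiI) hk'
    have hmid : |g (t + s (φ k)) (d i : EuclideanSpace ℝ (Fin n)) -
        g (t + s (φ k')) (d i : EuclideanSpace ℝ (Fin n))| ≤ ε / 3 := by
      have h3 := hNf i k hki k' hki'
      have h4 := BoundedContinuousFunction.dist_coe_le_dist
        (f := T i (s (φ k))) (g := T i (s (φ k'))) t
      rw [hTval, hTval, Real.dist_eq] at h4
      linarith
    have h5 := hpair (t + s (φ k))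
    have h6 := hpair (t + s (φ k'))
    calc |g (t + s (φ k)) x - g (t + s (φ k')) x|
        ≤ |g (t + s (φ k)) x - g (t + s (φ k)) (d i : EuclideanSpace ℝ (Fin n))| +
          |g (t + s (φ k)) (d i : EuclideanSpace ℝ (Fin n)) -
            g (t + s (φ k')) (d i : EuclideanSpace ℝ (Fin n))| +
          |g (t + s (φ k')) (d i : EuclideanSpace ℝ (Fin n)) - g (t + s (φ k')) x| := by
          have := abs_sub_le (g (t + s (φ k)) x)
            (g (t + s (φ k)) (d i : EuclideanSpace ℝ (Fin n))) (g (t + s (φ k')) x)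
          have h7 := abs_sub_le (g (t + s (φ k)) (d i : EuclideanSpace ℝ (Fin n)))
            (g (t + s (φ k')) (d i : EuclideanSpace ℝ (Fin n))) (g (t + s (φ k')) x)
          linarith
      _ ≤ ε := by
          rw [abs_sub_comm (g (t + s (φ k')) (d i : EuclideanSpace ℝ (Fin n)))
            (g (t + s (φ k')) x)]
          linarith
  -- pointwise limits exist
  have hptCau : ∀ (t : ℝ) (x : EuclideanSpace ℝ (Fin n)), ∃ c : ℝ,
      x ∈ K → Tendsto (fun k => g (t + s (φ k)) x) atTop (𝓝 c) := by
    intro t x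
    by_cases hx : x ∈ K
    · have hcs : CauchySeq fun k => g (t + s (φ k)) x := by
        rw [Metric.cauchySeq_iff]
        intro ε hε
        obtain ⟨N, hN⟩ := key (ε / 2) (by linarith)
        refine ⟨N, fun m hm m' hm' => ?_⟩
        have := hN m hm m' hm' t x hx
        rw [Real.dist_eq]
        linarith
      obtain ⟨c, hc⟩ := cauchySeq_tendsto_of_complete hcs
      exact ⟨c, fun _ => hc⟩
    · exact ⟨0, fun h => absurd h hx⟩
  choose G hG using hptCau
  refine ⟨φ, hφ, G, fun t x hx => hG t x hx, ?_⟩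
  intro ε hε
  obtain ⟨N, hN⟩ := key ε hε
  refine ⟨N, fun m hm t x hx => ?_⟩
  have hten : Tendsto (fun k' => |g (t + s (φ m)) x - g (t + s (φ k')) x|) atTop
      (𝓝 |g (t + s (φ m)) x - G t x|) := (tendsto_const_nhds.sub (hG t x hx)).abs
  refine le_of_tendsto hten ?_
  exact eventually_atTop.2 ⟨N, fun k' hk' => hN m hm k' hk' t x hx⟩

lemma bohr_of_crit (f : ℝ → ℝ) (hf : Continuous f)
    (crit : ∀ β' γ' : ℕ → ℝ, ∃ φ : ℕ → ℕ, StrictMono φ ∧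
      ∀ t : ℝ, ∃ (h : ℕ → ℝ) (L : ℝ),
        (∀ n', Tendsto (fun m => f (t + β' (φ n') + γ' (φ m))) atTop (𝓝 (h n'))) ∧
        Tendsto h atTop (𝓝 L) ∧
        Tendsto (fun n' => f (t + β' (φ n') + γ' (φ n'))) atTop (𝓝 L)) :
    BohrAlmostPeriodic f := by
  -- pointwise limits along a subsequence
  have pt : ∀ α : ℕ → ℝ, ∃ φ : ℕ → ℕ, StrictMono φ ∧ ∃ F : ℝ → ℝ,
      ∀ t, Tendsto (fun m => f (t + α (φ m))) atTop (𝓝 (F t)) := by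
    intro α
    obtain ⟨φ, hφ, hc⟩ := crit (fun _ => 0) α
    have : ∀ t, ∃ c, Tendsto (fun m => f (t + α (φ m))) atTop (𝓝 c) := by
      intro t
      obtain ⟨h, L, h1, -, -⟩ := hc t
      exact ⟨h 0, by simpa using h1 0⟩
    choose F hF using this
    exact ⟨φ, hφ, F, hF⟩
  -- uniform convergence along a subsequence
  have unif : ∀ α : ℕ → ℝ, ∃ φ : ℕ → ℕ, StrictMono φ ∧ ∃ F : ℝ → ℝ,
      TendstoUniformly (fun m t => f (t + α (φ m))) F atTop := by
    intro α
    obtain ⟨φ, hφ, F, hF⟩ := pt α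
    refine ⟨φ, hφ, F, ?_⟩
    rw [Metric.tendstoUniformly_iff]
    by_contra hcon
    push_neg at hcon
    obtain ⟨ε, hε, hfreq⟩ := hcon
    have hfreq : ∃ᶠ m in atTop, ¬ ∀ t, dist (F t) (f (t + α (φ m))) < ε :=
      hfreq.mono fun m hm => by push_neg; exact hm
    have hfreq' : ∃ᶠ m in atTop, ∃ t, ε ≤ dist (F t) (f (t + α (φ m))) := by
      refine hfreq.mono fun m hm => ?_
      push_neg at hm
      obtain ⟨t, ht⟩ := hm
      exact ⟨t, ht⟩
    obtain ⟨ms, hms, hsep⟩ := Filter.extraction_of_frequently_atTop hfreq'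
    choose ts hts using hsep
    obtain ⟨ψ, hψ, hc⟩ := crit ts (fun j => α (φ (ms j)))
    obtain ⟨h, L, hinner, hh, hdiag⟩ := hc 0
    have hFeq : ∀ j, h j = F (ts (ψ j)) := by
      intro j
      have h2 : Tendsto (fun i => f (ts (ψ j) + α (φ (ms (ψ i))))) atTop
          (𝓝 (F (ts (ψ j)))) := by
        have hsub : StrictMono fun i => ms (ψ i) := hms.comp hψ
        exact (hF (ts (ψ j))).comp hsub.tendsto_atTop
      refine tendsto_nhds_unique ?_ h2
      simpa using hinner j
    have h3 : Tendsto (fun j => F (ts (ψ j))) atTop (𝓝 L) := by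
      have : h = fun j => F (ts (ψ j)) := funext hFeq
      rwa [this] at hh
    have h4 : Tendsto (fun j => f (ts (ψ j) + α (φ (ms (ψ j))))) atTop (𝓝 L) := by
      simpa using hdiag
    have h5 : Tendsto
        (fun j => dist (F (ts (ψ j))) (f (ts (ψ j) + α (φ (ms (ψ j)))))) atTop (𝓝 0) := by
      have h6 := h3.sub h4
      rw [sub_self] at h6
      have h7 := h6.abs
      rw [abs_zero] at h7
      simpa [Real.dist_eq] using h7
    have h8 : ε ≤ 0 := ge_of_tendsto' h5 fun j => hts (ψ j)
    linarith
  refine ⟨hf, ?_⟩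
  intro ε hε
  by_contra hcon
  push_neg at hcon
  -- hcon : ∀ l > 0, ∃ s, ∀ τ ∈ Icc s (s+l), ∃ t, ε ≤ |f (t+τ) - f t|
  have step : ∀ M : ℝ, ∃ a : ℝ, ∀ τ ∈ Set.Icc a (a + (2 * |M| + 2)),
      ∃ t, ε ≤ |f (t + τ) - f t| := by
    intro M
    obtain ⟨s, hs⟩ := hcon (2 * |M| + 2) (by positivity)
    exact ⟨s, hs⟩
  choose A hA using step
  set S : ℕ → ℝ × ℝ := fun k => Nat.rec ((0 : ℝ), (0 : ℝ))
    (fun _ p => (A p.2 + |p.2| + 1, max p.2 |A p.2 + |p.2| + 1|)) k with hS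
  set s : ℕ → ℝ := fun k => (S k).1 with hs
  set M : ℕ → ℝ := fun k => (S k).2 with hM
  have hSsucc : ∀ k, S (k + 1) = (A (M k) + |M k| + 1, max (M k) |A (M k) + |M k| + 1|) := by
    intro k; rfl
  have hs0 : s 0 = 0 := rfl
  have hM0 : M 0 = 0 := rfl
  have hssucc : ∀ k, s (k + 1) = A (M k) + |M k| + 1 := by
    intro k; show (S (k + 1)).1 = _; rw [hSsucc k]
  have hMsucc : ∀ k, M (k + 1) = max (M k) |s (k + 1)| := by
    intro k; show (S (k + 1)).2 = _; rw [hSsucc k, hssucc k]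
  have hMmono : Monotone M := by
    apply monotone_nat_of_le_succ
    intro k; rw [hMsucc k]; exact le_max_left _ _
  have hbound : ∀ i k, i ≤ k → |s i| ≤ M k := by
    intro i k hik
    have h1 : |s i| ≤ M i := by
      cases i with
      | zero => simp [hs0, hM0]
      | succ j => rw [hMsucc j]; exact le_max_right _ _
    exact h1.trans (hMmono hik)
  have hsep : ∀ i j, i < j → ∃ u, ε ≤ |f (u + s j) - f (u + s i)| := by
    intro i j hij
    obtain ⟨k, rfl⟩ : ∃ k, j = k + 1 := ⟨j - 1, by omega⟩
    have hik : i ≤ k := by omega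
    have hMk : 0 ≤ M k := by
      have := hbound 0 k (Nat.zero_le k)
      simp [hs0] at this
      linarith [abs_nonneg (s 0)]
    have hsi : |s i| ≤ M k := hbound i k hik
    have hmem : s (k + 1) - s i ∈ Set.Icc (A (M k)) (A (M k) + (2 * |M k| + 2)) := by
      rw [hssucc k]
      have habs : |M k| = M k := abs_of_nonneg hMk
      constructor
      · have := abs_le.1 hsi
        rw [habs]; linarith [this.2]
      · have := abs_le.1 hsi
        rw [habs]; linarith [this.1]
    obtain ⟨t, ht⟩ := hA (M k) _ hmem
    refine ⟨t - s i, ?_⟩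
    have e1 : t - s i + s (k + 1) = t + (s (k + 1) - s i) := by ring
    have e2 : t - s i + s i = t := by ring
    rw [e1, e2]
    exact ht
  obtain ⟨φ, hφ, F, hF⟩ := unif s
  rw [Metric.tendstoUniformly_iff] at hF
  obtain ⟨N, hN⟩ := (Filter.eventually_atTop).1 (hF (ε / 2) (by linarith))
  obtain ⟨u, hu⟩ := hsep (φ N) (φ (N + 1)) (hφ (Nat.lt_succ_self N))
  have h1 := hN N le_rfl u
  have h2 := hN (N + 1) (Nat.le_succ N) u
  rw [Real.dist_eq] at h1 h2
  have : |f (u + s (φ (N + 1))) - f (u + s (φ N))| < ε := by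
    calc |f (u + s (φ (N + 1))) - f (u + s (φ N))|
        ≤ |f (u + s (φ (N + 1))) - F u| + |F u - f (u + s (φ N))| := abs_sub_le _ _ _
      _ < ε := by rw [abs_sub_comm (f (u + s (φ (N + 1)))) (F u)]; linarith
  linarith

/-- `g` is almost periodic in `t` uniformly with respect to `x ∈ K` if and
only if `g` is uniformly continuous on `ℝ × K` and for any two sequences `{β'_n}, {γ'_n}`
there are subsequences (extracted with the same indices) such that, for every `(t, x)`,
the iterated limit `lim_n lim_m g(t + β_n + γ_m, x)` and the diagonal limit
`lim_n g(t + β_n + γ_n, x)` both exist and coincide. -/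
theorem almost_periodic_uniformly_iff_double_sequence_criterion
    (n : ℕ) (hn : 1 ≤ n)
    (K : Set (EuclideanSpace ℝ (Fin n))) (hK : IsCompact K)
    (g : ℝ → EuclideanSpace ℝ (Fin n) → ℝ)
    (hg : ContinuousOn (fun p : ℝ × EuclideanSpace ℝ (Fin n) => g p.1 p.2)
      (Set.univ ×ˢ K)) :
    AlmostPeriodicUniformlyIn g K ↔
      (UniformContinuousOn (fun p : ℝ × EuclideanSpace ℝ (Fin n) => g p.1 p.2)
          (Set.univ ×ˢ K) ∧
        ∀ β' γ' : ℕ → ℝ, ∃ φ : ℕ → ℕ, StrictMono φ ∧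
          ∀ (t : ℝ), ∀ x ∈ K, ∃ (h : ℕ → ℝ) (L : ℝ),
            (∀ n' : ℕ, Filter.Tendsto (fun m => g (t + β' (φ n') + γ' (φ m)) x)
              Filter.atTop (nhds (h n'))) ∧
            Filter.Tendsto h Filter.atTop (nhds L) ∧
            Filter.Tendsto (fun n' => g (t + β' (φ n') + γ' (φ n')) x)
              Filter.atTop (nhds L)) := by
  constructor
  · rintro ⟨hUC, hap⟩
    refine ⟨hUC, ?_⟩
    intro β' γ'
    obtain ⟨φ1, hφ1, G, hGpt, hGu⟩ := seq_extract hK hUC hap γ'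
    obtain ⟨φ2, hφ2, H, hHpt, hHu⟩ := seq_extract hK hUC hap
      (fun k => β' (φ1 k) + γ' (φ1 k))
    refine ⟨φ1 ∘ φ2, hφ1.comp hφ2, ?_⟩
    intro t x hx
    refine ⟨fun n' => G (t + β' (φ1 (φ2 n'))) x, H t x, ?_, ?_, ?_⟩
    · intro n'
      exact (hGpt (t + β' (φ1 (φ2 n'))) x hx).comp hφ2.tendsto_atTop
    · rw [Metric.tendsto_atTop]
      intro ε hε
      obtain ⟨N1, hN1⟩ := hGu (ε / 3) (by linarith)
      obtain ⟨N2, hN2⟩ := hHu (ε / 3) (by linarith)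
      refine ⟨max N1 N2, fun m hm => ?_⟩
      have hm1 : φ2 m ≥ N1 := le_trans (le_trans (le_max_left _ _) hm) hφ2.le_apply
      have hm2 : m ≥ N2 := le_trans (le_max_right _ _) hm
      have h1 := hN1 (φ2 m) hm1 (t + β' (φ1 (φ2 m))) x hx
      have h2 := hN2 m hm2 t x hx
      rw [Real.dist_eq]
      have e1 : t + β' (φ1 (φ2 m)) + γ' (φ1 (φ2 m)) =
          t + (β' (φ1 (φ2 m)) + γ' (φ1 (φ2 m))) := by ring
      rw [e1] at h1
      calc |G (t + β' (φ1 (φ2 m))) x - H t x|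
          ≤ |G (t + β' (φ1 (φ2 m))) x - g (t + (β' (φ1 (φ2 m)) + γ' (φ1 (φ2 m)))) x| +
            |g (t + (β' (φ1 (φ2 m)) + γ' (φ1 (φ2 m)))) x - H t x| := abs_sub_le _ _ _
        _ < ε := by
            rw [abs_sub_comm] at h1
            linarith
    · have := hHpt t x hx
      have e : ∀ k, t + (β' (φ1 (φ2 k)) + γ' (φ1 (φ2 k))) =
          t + β' (φ1 (φ2 k)) + γ' (φ1 (φ2 k)) := fun k => by ring
      simpa only [e, Function.comp_apply] using this
  · rintro ⟨hUC, hcrit⟩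
    refine ⟨hUC, fun x hx => ?_⟩
    have hfc : Continuous fun t => g t x := by
      have h1 : Continuous fun t : ℝ => ((t, x) : ℝ × EuclideanSpace ℝ (Fin n)) :=
        continuous_id.prodMk continuous_const
      have h2 : ContinuousOn (fun t : ℝ => g t x) Set.univ :=
        hg.comp h1.continuousOn (fun t _ => ⟨Set.mem_univ _, hx⟩)
      rw [continuousOn_univ] at h2
      exact h2
    apply bohr_of_crit _ hfc
    intro β' γ'
    obtain ⟨φ, hφ, hall⟩ := hcrit β' γ'
    exact ⟨φ, hφ, fun t => hall t x hx⟩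
end
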